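/- For q = 762 and p = 38943534114929: p is prime, p + 340·762 is prime, no integer m with p < m < p + 340·762 and m ≡ p (mod 762) is prime, and moreover ⌊√p⌋ = ⌊√(p + 340·762)⌋ (in particular p exceeds the square of the gap 340·762 = 259080). -/

import Mathlib

set_option linter.unusedVariables false
set_option maxHeartbeats 4000000
set_option exponentiation.threshold 1000000000000000

private lemma sq_step {a n e r v : ℕ} (h : a ^ e % n = r) (hv : r * r % n = v)
    (he' : True) : a ^ (2 * e) % n = v := by
  subst hv
  rw [two_mul, pow_add, Nat.mul_mod, h]

private lemma sq1_step {a n e r v : ℕ} (h : a ^ e % n = r) (hv : r * r % n * a % n = v)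
    (he' : True) : a ^ (2 * e + 1) % n = v := by
  subst hv
  have h2 : a ^ (2 * e) % n = r * r % n := by
    rw [two_mul, pow_add, Nat.mul_mod, h]
  conv_lhs => rw [pow_succ, Nat.mul_mod, h2]
  conv_rhs => rw [Nat.mul_mod, Nat.mod_mod_of_dvd _ dvd_rfl]

private lemma natpow_cast {a n e r : ℕ} (h : a ^ e % n = r) :
    ((a:ℕ) : ZMod n) ^ e = ((r:ℕ) : ZMod n) := by
  rw [← h, ← Nat.cast_pow, ZMod.natCast_mod]

private lemma np {m a b : ℕ} (h : a * b = m) (ha : a ≠ 1) (hb : b ≠ 1) : ¬ m.Prime :=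
  h ▸ Nat.not_prime_mul ha hb

theorem prime_p : Nat.Prime 38943534114929 := by
  have ha0 : (3:ℕ) ^ 1 % 38943534114929 = 3 := by norm_num
  have ha1 : (3:ℕ) ^ 2 % 38943534114929 = 9 := by
    rw [show (2:ℕ) = 2 * 1 by norm_num]; exact sq_step ha0 (by norm_num) trivial
  have ha2 : (3:ℕ) ^ 4 % 38943534114929 = 81 := by
    rw [show (4:ℕ) = 2 * 2 by norm_num]; exact sq_step ha1 (by norm_num) trivial
  have ha3 : (3:ℕ) ^ 8 % 38943534114929 = 6561 := by
    rw [show (8:ℕ) = 2 * 4 by norm_num]; exact sq_step ha2 (by norm_num) trivial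
  have ha4 : (3:ℕ) ^ 17 % 38943534114929 = 129140163 := by
    rw [show (17:ℕ) = 2 * 8 + 1 by norm_num]; exact sq1_step ha3 (by norm_num) trivial
  have ha5 : (3:ℕ) ^ 35 % 38943534114929 = 28047295430871 := by
    rw [show (35:ℕ) = 2 * 17 + 1 by norm_num]; exact sq1_step ha4 (by norm_num) trivial
  have ha6 : (3:ℕ) ^ 70 % 38943534114929 = 6700707936117 := by
    rw [show (70:ℕ) = 2 * 35 by norm_num]; exact sq_step ha5 (by norm_num) trivial
  have ha7 : (3:ℕ) ^ 141 % 38943534114929 = 21232769092792 := by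
    rw [show (141:ℕ) = 2 * 70 + 1 by norm_num]; exact sq1_step ha6 (by norm_num) trivial
  have ha8 : (3:ℕ) ^ 283 % 38943534114929 = 2562952427217 := by
    rw [show (283:ℕ) = 2 * 141 + 1 by norm_num]; exact sq1_step ha7 (by norm_num) trivial
  have ha9 : (3:ℕ) ^ 566 % 38943534114929 = 27807942111876 := by
    rw [show (566:ℕ) = 2 * 283 by norm_num]; exact sq_step ha8 (by norm_num) trivial
  have ha10 : (3:ℕ) ^ 1133 % 38943534114929 = 36316158464339 := by
    rw [show (1133:ℕ) = 2 * 566 + 1 by norm_num]; exact sq1_step ha9 (by norm_num) trivial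
  have ha11 : (3:ℕ) ^ 2266 % 38943534114929 = 13051481512480 := by
    rw [show (2266:ℕ) = 2 * 1133 by norm_num]; exact sq_step ha10 (by norm_num) trivial
  have ha12 : (3:ℕ) ^ 4533 % 38943534114929 = 27956444625660 := by
    rw [show (4533:ℕ) = 2 * 2266 + 1 by norm_num]; exact sq1_step ha11 (by norm_num) trivial
  have ha13 : (3:ℕ) ^ 9067 % 38943534114929 = 31685939942540 := by
    rw [show (9067:ℕ) = 2 * 4533 + 1 by norm_num]; exact sq1_step ha12 (by norm_num) trivial
  have ha14 : (3:ℕ) ^ 18134 % 38943534114929 = 35452950093175 := by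
    rw [show (18134:ℕ) = 2 * 9067 by norm_num]; exact sq_step ha13 (by norm_num) trivial
  have ha15 : (3:ℕ) ^ 36268 % 38943534114929 = 23305428333921 := by
    rw [show (36268:ℕ) = 2 * 18134 by norm_num]; exact sq_step ha14 (by norm_num) trivial
  have ha16 : (3:ℕ) ^ 72537 % 38943534114929 = 24624337704210 := by
    rw [show (72537:ℕ) = 2 * 36268 + 1 by norm_num]; exact sq1_step ha15 (by norm_num) trivial
  have ha17 : (3:ℕ) ^ 145075 % 38943534114929 = 14864265857986 := by
    rw [show (145075:ℕ) = 2 * 72537 + 1 by norm_num]; exact sq1_step ha16 (by norm_num) trivial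
  have ha18 : (3:ℕ) ^ 290151 % 38943534114929 = 11039671559431 := by
    rw [show (290151:ℕ) = 2 * 145075 + 1 by norm_num]; exact sq1_step ha17 (by norm_num) trivial
  have ha19 : (3:ℕ) ^ 580303 % 38943534114929 = 6214787835513 := by
    rw [show (580303:ℕ) = 2 * 290151 + 1 by norm_num]; exact sq1_step ha18 (by norm_num) trivial
  have ha20 : (3:ℕ) ^ 1160607 % 38943534114929 = 10281085567843 := by
    rw [show (1160607:ℕ) = 2 * 580303 + 1 by norm_num]; exact sq1_step ha19 (by norm_num) trivial
  have ha21 : (3:ℕ) ^ 2321215 % 38943534114929 = 11670201212542 := by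
    rw [show (2321215:ℕ) = 2 * 1160607 + 1 by norm_num]; exact sq1_step ha20 (by norm_num) trivial
  have ha22 : (3:ℕ) ^ 4642431 % 38943534114929 = 4839605284052 := by
    rw [show (4642431:ℕ) = 2 * 2321215 + 1 by norm_num]; exact sq1_step ha21 (by norm_num) trivial
  have ha23 : (3:ℕ) ^ 9284862 % 38943534114929 = 35877544328231 := by
    rw [show (9284862:ℕ) = 2 * 4642431 by norm_num]; exact sq_step ha22 (by norm_num) trivial
  have ha24 : (3:ℕ) ^ 18569724 % 38943534114929 = 28753354113798 := by
    rw [show (18569724:ℕ) = 2 * 9284862 by norm_num]; exact sq_step ha23 (by norm_num) trivial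
  have ha25 : (3:ℕ) ^ 37139448 % 38943534114929 = 21080650468908 := by
    rw [show (37139448:ℕ) = 2 * 18569724 by norm_num]; exact sq_step ha24 (by norm_num) trivial
  have ha26 : (3:ℕ) ^ 74278896 % 38943534114929 = 37563507268002 := by
    rw [show (74278896:ℕ) = 2 * 37139448 by norm_num]; exact sq_step ha25 (by norm_num) trivial
  have ha27 : (3:ℕ) ^ 148557793 % 38943534114929 = 25457702993240 := by
    rw [show (148557793:ℕ) = 2 * 74278896 + 1 by norm_num]; exact sq1_step ha26 (by norm_num) trivial
  have ha28 : (3:ℕ) ^ 297115586 % 38943534114929 = 14969472237983 := by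
    rw [show (297115586:ℕ) = 2 * 148557793 by norm_num]; exact sq_step ha27 (by norm_num) trivial
  have ha29 : (3:ℕ) ^ 594231172 % 38943534114929 = 25372770476342 := by
    rw [show (594231172:ℕ) = 2 * 297115586 by norm_num]; exact sq_step ha28 (by norm_num) trivial
  have ha30 : (3:ℕ) ^ 1188462344 % 38943534114929 = 20851199634157 := by
    rw [show (1188462344:ℕ) = 2 * 594231172 by norm_num]; exact sq_step ha29 (by norm_num) trivial
  have ha31 : (3:ℕ) ^ 2376924689 % 38943534114929 = 19803114106153 := by
    rw [show (2376924689:ℕ) = 2 * 1188462344 + 1 by norm_num]; exact sq1_step ha30 (by norm_num) trivial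
  have ha32 : (3:ℕ) ^ 4753849379 % 38943534114929 = 24357494089600 := by
    rw [show (4753849379:ℕ) = 2 * 2376924689 + 1 by norm_num]; exact sq1_step ha31 (by norm_num) trivial
  have ha33 : (3:ℕ) ^ 9507698758 % 38943534114929 = 3786153095096 := by
    rw [show (9507698758:ℕ) = 2 * 4753849379 by norm_num]; exact sq_step ha32 (by norm_num) trivial
  have ha34 : (3:ℕ) ^ 19015397517 % 38943534114929 = 38779896928550 := by
    rw [show (19015397517:ℕ) = 2 * 9507698758 + 1 by norm_num]; exact sq1_step ha33 (by norm_num) trivial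
  have ha35 : (3:ℕ) ^ 38030795034 % 38943534114929 = 27923006944756 := by
    rw [show (38030795034:ℕ) = 2 * 19015397517 by norm_num]; exact sq_step ha34 (by norm_num) trivial
  have ha36 : (3:ℕ) ^ 76061590068 % 38943534114929 = 1357400968717 := by
    rw [show (76061590068:ℕ) = 2 * 38030795034 by norm_num]; exact sq_step ha35 (by norm_num) trivial
  have ha37 : (3:ℕ) ^ 152123180136 % 38943534114929 = 32481026559945 := by
    rw [show (152123180136:ℕ) = 2 * 76061590068 by norm_num]; exact sq_step ha36 (by norm_num) trivial
  have ha38 : (3:ℕ) ^ 304246360272 % 38943534114929 = 28687421852330 := by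
    rw [show (304246360272:ℕ) = 2 * 152123180136 by norm_num]; exact sq_step ha37 (by norm_num) trivial
  have ha39 : (3:ℕ) ^ 608492720545 % 38943534114929 = 1578779544578 := by
    rw [show (608492720545:ℕ) = 2 * 304246360272 + 1 by norm_num]; exact sq1_step ha38 (by norm_num) trivial
  have ha40 : (3:ℕ) ^ 1216985441091 % 38943534114929 = 13539539436744 := by
    rw [show (1216985441091:ℕ) = 2 * 608492720545 + 1 by norm_num]; exact sq1_step ha39 (by norm_num) trivial
  have ha41 : (3:ℕ) ^ 2433970882183 % 38943534114929 = 25277884008824 := by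
    rw [show (2433970882183:ℕ) = 2 * 1216985441091 + 1 by norm_num]; exact sq1_step ha40 (by norm_num) trivial
  have ha42 : (3:ℕ) ^ 4867941764366 % 38943534114929 = 24546355301297 := by
    rw [show (4867941764366:ℕ) = 2 * 2433970882183 by norm_num]; exact sq_step ha41 (by norm_num) trivial
  have ha43 : (3:ℕ) ^ 9735883528732 % 38943534114929 = 36334549919065 := by
    rw [show (9735883528732:ℕ) = 2 * 4867941764366 by norm_num]; exact sq_step ha42 (by norm_num) trivial
  have ha44 : (3:ℕ) ^ 19471767057464 % 38943534114929 = 38943534114928 := by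
    rw [show (19471767057464:ℕ) = 2 * 9735883528732 by norm_num]; exact sq_step ha43 (by norm_num) trivial
  have ha45 : (3:ℕ) ^ 38943534114928 % 38943534114929 = 1 := by
    rw [show (38943534114928:ℕ) = 2 * 19471767057464 by norm_num]; exact sq_step ha44 (by norm_num) trivial
  have h2x0 : (3:ℕ) ^ 1 % 38943534114929 = 3 := by norm_num
  have h2x1 : (3:ℕ) ^ 2 % 38943534114929 = 9 := by
    rw [show (2:ℕ) = 2 * 1 by norm_num]; exact sq_step h2x0 (by norm_num) trivial
  have h2x2 : (3:ℕ) ^ 4 % 38943534114929 = 81 := by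
    rw [show (4:ℕ) = 2 * 2 by norm_num]; exact sq_step h2x1 (by norm_num) trivial
  have h2x3 : (3:ℕ) ^ 8 % 38943534114929 = 6561 := by
    rw [show (8:ℕ) = 2 * 4 by norm_num]; exact sq_step h2x2 (by norm_num) trivial
  have h2x4 : (3:ℕ) ^ 17 % 38943534114929 = 129140163 := by
    rw [show (17:ℕ) = 2 * 8 + 1 by norm_num]; exact sq1_step h2x3 (by norm_num) trivial
  have h2x5 : (3:ℕ) ^ 35 % 38943534114929 = 28047295430871 := by
    rw [show (35:ℕ) = 2 * 17 + 1 by norm_num]; exact sq1_step h2x4 (by norm_num) trivial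
  have h2x6 : (3:ℕ) ^ 70 % 38943534114929 = 6700707936117 := by
    rw [show (70:ℕ) = 2 * 35 by norm_num]; exact sq_step h2x5 (by norm_num) trivial
  have h2x7 : (3:ℕ) ^ 141 % 38943534114929 = 21232769092792 := by
    rw [show (141:ℕ) = 2 * 70 + 1 by norm_num]; exact sq1_step h2x6 (by norm_num) trivial
  have h2x8 : (3:ℕ) ^ 283 % 38943534114929 = 2562952427217 := by
    rw [show (283:ℕ) = 2 * 141 + 1 by norm_num]; exact sq1_step h2x7 (by norm_num) trivial
  have h2x9 : (3:ℕ) ^ 566 % 38943534114929 = 27807942111876 := by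
    rw [show (566:ℕ) = 2 * 283 by norm_num]; exact sq_step h2x8 (by norm_num) trivial
  have h2x10 : (3:ℕ) ^ 1133 % 38943534114929 = 36316158464339 := by
    rw [show (1133:ℕ) = 2 * 566 + 1 by norm_num]; exact sq1_step h2x9 (by norm_num) trivial
  have h2x11 : (3:ℕ) ^ 2266 % 38943534114929 = 13051481512480 := by
    rw [show (2266:ℕ) = 2 * 1133 by norm_num]; exact sq_step h2x10 (by norm_num) trivial
  have h2x12 : (3:ℕ) ^ 4533 % 38943534114929 = 27956444625660 := by
    rw [show (4533:ℕ) = 2 * 2266 + 1 by norm_num]; exact sq1_step h2x11 (by norm_num) trivial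
  have h2x13 : (3:ℕ) ^ 9067 % 38943534114929 = 31685939942540 := by
    rw [show (9067:ℕ) = 2 * 4533 + 1 by norm_num]; exact sq1_step h2x12 (by norm_num) trivial
  have h2x14 : (3:ℕ) ^ 18134 % 38943534114929 = 35452950093175 := by
    rw [show (18134:ℕ) = 2 * 9067 by norm_num]; exact sq_step h2x13 (by norm_num) trivial
  have h2x15 : (3:ℕ) ^ 36268 % 38943534114929 = 23305428333921 := by
    rw [show (36268:ℕ) = 2 * 18134 by norm_num]; exact sq_step h2x14 (by norm_num) trivial
  have h2x16 : (3:ℕ) ^ 72537 % 38943534114929 = 24624337704210 := by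
    rw [show (72537:ℕ) = 2 * 36268 + 1 by norm_num]; exact sq1_step h2x15 (by norm_num) trivial
  have h2x17 : (3:ℕ) ^ 145075 % 38943534114929 = 14864265857986 := by
    rw [show (145075:ℕ) = 2 * 72537 + 1 by norm_num]; exact sq1_step h2x16 (by norm_num) trivial
  have h2x18 : (3:ℕ) ^ 290151 % 38943534114929 = 11039671559431 := by
    rw [show (290151:ℕ) = 2 * 145075 + 1 by norm_num]; exact sq1_step h2x17 (by norm_num) trivial
  have h2x19 : (3:ℕ) ^ 580303 % 38943534114929 = 6214787835513 := by
    rw [show (580303:ℕ) = 2 * 290151 + 1 by norm_num]; exact sq1_step h2x18 (by norm_num) trivial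
  have h2x20 : (3:ℕ) ^ 1160607 % 38943534114929 = 10281085567843 := by
    rw [show (1160607:ℕ) = 2 * 580303 + 1 by norm_num]; exact sq1_step h2x19 (by norm_num) trivial
  have h2x21 : (3:ℕ) ^ 2321215 % 38943534114929 = 11670201212542 := by
    rw [show (2321215:ℕ) = 2 * 1160607 + 1 by norm_num]; exact sq1_step h2x20 (by norm_num) trivial
  have h2x22 : (3:ℕ) ^ 4642431 % 38943534114929 = 4839605284052 := by
    rw [show (4642431:ℕ) = 2 * 2321215 + 1 by norm_num]; exact sq1_step h2x21 (by norm_num) trivial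
  have h2x23 : (3:ℕ) ^ 9284862 % 38943534114929 = 35877544328231 := by
    rw [show (9284862:ℕ) = 2 * 4642431 by norm_num]; exact sq_step h2x22 (by norm_num) trivial
  have h2x24 : (3:ℕ) ^ 18569724 % 38943534114929 = 28753354113798 := by
    rw [show (18569724:ℕ) = 2 * 9284862 by norm_num]; exact sq_step h2x23 (by norm_num) trivial
  have h2x25 : (3:ℕ) ^ 37139448 % 38943534114929 = 21080650468908 := by
    rw [show (37139448:ℕ) = 2 * 18569724 by norm_num]; exact sq_step h2x24 (by norm_num) trivial
  have h2x26 : (3:ℕ) ^ 74278896 % 38943534114929 = 37563507268002 := by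
    rw [show (74278896:ℕ) = 2 * 37139448 by norm_num]; exact sq_step h2x25 (by norm_num) trivial
  have h2x27 : (3:ℕ) ^ 148557793 % 38943534114929 = 25457702993240 := by
    rw [show (148557793:ℕ) = 2 * 74278896 + 1 by norm_num]; exact sq1_step h2x26 (by norm_num) trivial
  have h2x28 : (3:ℕ) ^ 297115586 % 38943534114929 = 14969472237983 := by
    rw [show (297115586:ℕ) = 2 * 148557793 by norm_num]; exact sq_step h2x27 (by norm_num) trivial
  have h2x29 : (3:ℕ) ^ 594231172 % 38943534114929 = 25372770476342 := by
    rw [show (594231172:ℕ) = 2 * 297115586 by norm_num]; exact sq_step h2x28 (by norm_num) trivial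
  have h2x30 : (3:ℕ) ^ 1188462344 % 38943534114929 = 20851199634157 := by
    rw [show (1188462344:ℕ) = 2 * 594231172 by norm_num]; exact sq_step h2x29 (by norm_num) trivial
  have h2x31 : (3:ℕ) ^ 2376924689 % 38943534114929 = 19803114106153 := by
    rw [show (2376924689:ℕ) = 2 * 1188462344 + 1 by norm_num]; exact sq1_step h2x30 (by norm_num) trivial
  have h2x32 : (3:ℕ) ^ 4753849379 % 38943534114929 = 24357494089600 := by
    rw [show (4753849379:ℕ) = 2 * 2376924689 + 1 by norm_num]; exact sq1_step h2x31 (by norm_num) trivial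
  have h2x33 : (3:ℕ) ^ 9507698758 % 38943534114929 = 3786153095096 := by
    rw [show (9507698758:ℕ) = 2 * 4753849379 by norm_num]; exact sq_step h2x32 (by norm_num) trivial
  have h2x34 : (3:ℕ) ^ 19015397517 % 38943534114929 = 38779896928550 := by
    rw [show (19015397517:ℕ) = 2 * 9507698758 + 1 by norm_num]; exact sq1_step h2x33 (by norm_num) trivial
  have h2x35 : (3:ℕ) ^ 38030795034 % 38943534114929 = 27923006944756 := by
    rw [show (38030795034:ℕ) = 2 * 19015397517 by norm_num]; exact sq_step h2x34 (by norm_num) trivial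
  have h2x36 : (3:ℕ) ^ 76061590068 % 38943534114929 = 1357400968717 := by
    rw [show (76061590068:ℕ) = 2 * 38030795034 by norm_num]; exact sq_step h2x35 (by norm_num) trivial
  have h2x37 : (3:ℕ) ^ 152123180136 % 38943534114929 = 32481026559945 := by
    rw [show (152123180136:ℕ) = 2 * 76061590068 by norm_num]; exact sq_step h2x36 (by norm_num) trivial
  have h2x38 : (3:ℕ) ^ 304246360272 % 38943534114929 = 28687421852330 := by
    rw [show (304246360272:ℕ) = 2 * 152123180136 by norm_num]; exact sq_step h2x37 (by norm_num) trivial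
  have h2x39 : (3:ℕ) ^ 608492720545 % 38943534114929 = 1578779544578 := by
    rw [show (608492720545:ℕ) = 2 * 304246360272 + 1 by norm_num]; exact sq1_step h2x38 (by norm_num) trivial
  have h2x40 : (3:ℕ) ^ 1216985441091 % 38943534114929 = 13539539436744 := by
    rw [show (1216985441091:ℕ) = 2 * 608492720545 + 1 by norm_num]; exact sq1_step h2x39 (by norm_num) trivial
  have h2x41 : (3:ℕ) ^ 2433970882183 % 38943534114929 = 25277884008824 := by
    rw [show (2433970882183:ℕ) = 2 * 1216985441091 + 1 by norm_num]; exact sq1_step h2x40 (by norm_num) trivial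
  have h2x42 : (3:ℕ) ^ 4867941764366 % 38943534114929 = 24546355301297 := by
    rw [show (4867941764366:ℕ) = 2 * 2433970882183 by norm_num]; exact sq_step h2x41 (by norm_num) trivial
  have h2x43 : (3:ℕ) ^ 9735883528732 % 38943534114929 = 36334549919065 := by
    rw [show (9735883528732:ℕ) = 2 * 4867941764366 by norm_num]; exact sq_step h2x42 (by norm_num) trivial
  have h2x44 : (3:ℕ) ^ 19471767057464 % 38943534114929 = 38943534114928 := by
    rw [show (19471767057464:ℕ) = 2 * 9735883528732 by norm_num]; exact sq_step h2x43 (by norm_num) trivial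
  have h61x0 : (3:ℕ) ^ 1 % 38943534114929 = 3 := by norm_num
  have h61x1 : (3:ℕ) ^ 2 % 38943534114929 = 9 := by
    rw [show (2:ℕ) = 2 * 1 by norm_num]; exact sq_step h61x0 (by norm_num) trivial
  have h61x2 : (3:ℕ) ^ 4 % 38943534114929 = 81 := by
    rw [show (4:ℕ) = 2 * 2 by norm_num]; exact sq_step h61x1 (by norm_num) trivial
  have h61x3 : (3:ℕ) ^ 9 % 38943534114929 = 19683 := by
    rw [show (9:ℕ) = 2 * 4 + 1 by norm_num]; exact sq1_step h61x2 (by norm_num) trivial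
  have h61x4 : (3:ℕ) ^ 18 % 38943534114929 = 387420489 := by
    rw [show (18:ℕ) = 2 * 9 by norm_num]; exact sq_step h61x3 (by norm_num) trivial
  have h61x5 : (3:ℕ) ^ 37 % 38943534114929 = 18764454188265 := by
    rw [show (37:ℕ) = 2 * 18 + 1 by norm_num]; exact sq1_step h61x4 (by norm_num) trivial
  have h61x6 : (3:ℕ) ^ 74 % 38943534114929 = 36491399331400 := by
    rw [show (74:ℕ) = 2 * 37 by norm_num]; exact sq_step h61x5 (by norm_num) trivial
  have h61x7 : (3:ℕ) ^ 148 % 38943534114929 = 15373340940736 := by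
    rw [show (148:ℕ) = 2 * 74 by norm_num]; exact sq_step h61x6 (by norm_num) trivial
  have h61x8 : (3:ℕ) ^ 297 % 38943534114929 = 32113292776369 := by
    rw [show (297:ℕ) = 2 * 148 + 1 by norm_num]; exact sq1_step h61x7 (by norm_num) trivial
  have h61x9 : (3:ℕ) ^ 594 % 38943534114929 = 269817087731 := by
    rw [show (594:ℕ) = 2 * 297 by norm_num]; exact sq_step h61x8 (by norm_num) trivial
  have h61x10 : (3:ℕ) ^ 1189 % 38943534114929 = 25478833003238 := by
    rw [show (1189:ℕ) = 2 * 594 + 1 by norm_num]; exact sq1_step h61x9 (by norm_num) trivial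
  have h61x11 : (3:ℕ) ^ 2378 % 38943534114929 = 23001387306090 := by
    rw [show (2378:ℕ) = 2 * 1189 by norm_num]; exact sq_step h61x10 (by norm_num) trivial
  have h61x12 : (3:ℕ) ^ 4756 % 38943534114929 = 37453490016647 := by
    rw [show (4756:ℕ) = 2 * 2378 by norm_num]; exact sq_step h61x11 (by norm_num) trivial
  have h61x13 : (3:ℕ) ^ 9513 % 38943534114929 = 263419372807 := by
    rw [show (9513:ℕ) = 2 * 4756 + 1 by norm_num]; exact sq1_step h61x12 (by norm_num) trivial
  have h61x14 : (3:ℕ) ^ 19026 % 38943534114929 = 2520808851731 := by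
    rw [show (19026:ℕ) = 2 * 9513 by norm_num]; exact sq_step h61x13 (by norm_num) trivial
  have h61x15 : (3:ℕ) ^ 38052 % 38943534114929 = 10762648543915 := by
    rw [show (38052:ℕ) = 2 * 19026 by norm_num]; exact sq_step h61x14 (by norm_num) trivial
  have h61x16 : (3:ℕ) ^ 76105 % 38943534114929 = 21138372729892 := by
    rw [show (76105:ℕ) = 2 * 38052 + 1 by norm_num]; exact sq1_step h61x15 (by norm_num) trivial
  have h61x17 : (3:ℕ) ^ 152210 % 38943534114929 = 10745941795380 := by
    rw [show (152210:ℕ) = 2 * 76105 by norm_num]; exact sq_step h61x16 (by norm_num) trivial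
  have h61x18 : (3:ℕ) ^ 304421 % 38943534114929 = 38058181108861 := by
    rw [show (304421:ℕ) = 2 * 152210 + 1 by norm_num]; exact sq1_step h61x17 (by norm_num) trivial
  have h61x19 : (3:ℕ) ^ 608843 % 38943534114929 = 12486047248904 := by
    rw [show (608843:ℕ) = 2 * 304421 + 1 by norm_num]; exact sq1_step h61x18 (by norm_num) trivial
  have h61x20 : (3:ℕ) ^ 1217686 % 38943534114929 = 9513198683084 := by
    rw [show (1217686:ℕ) = 2 * 608843 by norm_num]; exact sq_step h61x19 (by norm_num) trivial
  have h61x21 : (3:ℕ) ^ 2435373 % 38943534114929 = 36316307505168 := by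
    rw [show (2435373:ℕ) = 2 * 1217686 + 1 by norm_num]; exact sq1_step h61x20 (by norm_num) trivial
  have h61x22 : (3:ℕ) ^ 4870747 % 38943534114929 = 3759097257507 := by
    rw [show (4870747:ℕ) = 2 * 2435373 + 1 by norm_num]; exact sq1_step h61x21 (by norm_num) trivial
  have h61x23 : (3:ℕ) ^ 9741494 % 38943534114929 = 23755107910302 := by
    rw [show (9741494:ℕ) = 2 * 4870747 by norm_num]; exact sq_step h61x22 (by norm_num) trivial
  have h61x24 : (3:ℕ) ^ 19482989 % 38943534114929 = 12339247094756 := by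
    rw [show (19482989:ℕ) = 2 * 9741494 + 1 by norm_num]; exact sq1_step h61x23 (by norm_num) trivial
  have h61x25 : (3:ℕ) ^ 38965978 % 38943534114929 = 3812555007476 := by
    rw [show (38965978:ℕ) = 2 * 19482989 by norm_num]; exact sq_step h61x24 (by norm_num) trivial
  have h61x26 : (3:ℕ) ^ 77931957 % 38943534114929 = 8540094039302 := by
    rw [show (77931957:ℕ) = 2 * 38965978 + 1 by norm_num]; exact sq1_step h61x25 (by norm_num) trivial
  have h61x27 : (3:ℕ) ^ 155863914 % 38943534114929 = 32570635299021 := by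
    rw [show (155863914:ℕ) = 2 * 77931957 by norm_num]; exact sq_step h61x26 (by norm_num) trivial
  have h61x28 : (3:ℕ) ^ 311727828 % 38943534114929 = 11079379158037 := by
    rw [show (311727828:ℕ) = 2 * 155863914 by norm_num]; exact sq_step h61x27 (by norm_num) trivial
  have h61x29 : (3:ℕ) ^ 623455656 % 38943534114929 = 21659938147287 := by
    rw [show (623455656:ℕ) = 2 * 311727828 by norm_num]; exact sq_step h61x28 (by norm_num) trivial
  have h61x30 : (3:ℕ) ^ 1246911312 % 38943534114929 = 7967854158088 := by
    rw [show (1246911312:ℕ) = 2 * 623455656 by norm_num]; exact sq_step h61x29 (by norm_num) trivial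
  have h61x31 : (3:ℕ) ^ 2493822625 % 38943534114929 = 7185188136523 := by
    rw [show (2493822625:ℕ) = 2 * 1246911312 + 1 by norm_num]; exact sq1_step h61x30 (by norm_num) trivial
  have h61x32 : (3:ℕ) ^ 4987645250 % 38943534114929 = 11612374650739 := by
    rw [show (4987645250:ℕ) = 2 * 2493822625 by norm_num]; exact sq_step h61x31 (by norm_num) trivial
  have h61x33 : (3:ℕ) ^ 9975290500 % 38943534114929 = 13134349091476 := by
    rw [show (9975290500:ℕ) = 2 * 4987645250 by norm_num]; exact sq_step h61x32 (by norm_num) trivial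
  have h61x34 : (3:ℕ) ^ 19950581001 % 38943534114929 = 24019457766898 := by
    rw [show (19950581001:ℕ) = 2 * 9975290500 + 1 by norm_num]; exact sq1_step h61x33 (by norm_num) trivial
  have h61x35 : (3:ℕ) ^ 39901162003 % 38943534114929 = 3673202128783 := by
    rw [show (39901162003:ℕ) = 2 * 19950581001 + 1 by norm_num]; exact sq1_step h61x34 (by norm_num) trivial
  have h61x36 : (3:ℕ) ^ 79802324006 % 38943534114929 = 215395862862 := by
    rw [show (79802324006:ℕ) = 2 * 39901162003 by norm_num]; exact sq_step h61x35 (by norm_num) trivial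
  have h61x37 : (3:ℕ) ^ 159604648012 % 38943534114929 = 5873279508062 := by
    rw [show (159604648012:ℕ) = 2 * 79802324006 by norm_num]; exact sq_step h61x36 (by norm_num) trivial
  have h61x38 : (3:ℕ) ^ 319209296024 % 38943534114929 = 22349943155027 := by
    rw [show (319209296024:ℕ) = 2 * 159604648012 by norm_num]; exact sq_step h61x37 (by norm_num) trivial
  have h61x39 : (3:ℕ) ^ 638418592048 % 38943534114929 = 32332749694160 := by
    rw [show (638418592048:ℕ) = 2 * 319209296024 by norm_num]; exact sq_step h61x38 (by norm_num) trivial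
  have h36901x0 : (3:ℕ) ^ 1 % 38943534114929 = 3 := by norm_num
  have h36901x1 : (3:ℕ) ^ 3 % 38943534114929 = 27 := by
    rw [show (3:ℕ) = 2 * 1 + 1 by norm_num]; exact sq1_step h36901x0 (by norm_num) trivial
  have h36901x2 : (3:ℕ) ^ 7 % 38943534114929 = 2187 := by
    rw [show (7:ℕ) = 2 * 3 + 1 by norm_num]; exact sq1_step h36901x1 (by norm_num) trivial
  have h36901x3 : (3:ℕ) ^ 15 % 38943534114929 = 14348907 := by
    rw [show (15:ℕ) = 2 * 7 + 1 by norm_num]; exact sq1_step h36901x2 (by norm_num) trivial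
  have h36901x4 : (3:ℕ) ^ 31 % 38943534114929 = 33520384560012 := by
    rw [show (31:ℕ) = 2 * 15 + 1 by norm_num]; exact sq1_step h36901x3 (by norm_num) trivial
  have h36901x5 : (3:ℕ) ^ 62 % 38943534114929 = 15920326048495 := by
    rw [show (62:ℕ) = 2 * 31 by norm_num]; exact sq_step h36901x4 (by norm_num) trivial
  have h36901x6 : (3:ℕ) ^ 125 % 38943534114929 = 16577678424959 := by
    rw [show (125:ℕ) = 2 * 62 + 1 by norm_num]; exact sq1_step h36901x5 (by norm_num) trivial
  have h36901x7 : (3:ℕ) ^ 251 % 38943534114929 = 9463467737733 := by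
    rw [show (251:ℕ) = 2 * 125 + 1 by norm_num]; exact sq1_step h36901x6 (by norm_num) trivial
  have h36901x8 : (3:ℕ) ^ 503 % 38943534114929 = 24149736214864 := by
    rw [show (503:ℕ) = 2 * 251 + 1 by norm_num]; exact sq1_step h36901x7 (by norm_num) trivial
  have h36901x9 : (3:ℕ) ^ 1006 % 38943534114929 = 21423495971219 := by
    rw [show (1006:ℕ) = 2 * 503 by norm_num]; exact sq_step h36901x8 (by norm_num) trivial
  have h36901x10 : (3:ℕ) ^ 2012 % 38943534114929 = 37491803830164 := by
    rw [show (2012:ℕ) = 2 * 1006 by norm_num]; exact sq_step h36901x9 (by norm_num) trivial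
  have h36901x11 : (3:ℕ) ^ 4025 % 38943534114929 = 24813736242773 := by
    rw [show (4025:ℕ) = 2 * 2012 + 1 by norm_num]; exact sq1_step h36901x10 (by norm_num) trivial
  have h36901x12 : (3:ℕ) ^ 8051 % 38943534114929 = 15805855984532 := by
    rw [show (8051:ℕ) = 2 * 4025 + 1 by norm_num]; exact sq1_step h36901x11 (by norm_num) trivial
  have h36901x13 : (3:ℕ) ^ 16103 % 38943534114929 = 28375604691484 := by
    rw [show (16103:ℕ) = 2 * 8051 + 1 by norm_num]; exact sq1_step h36901x12 (by norm_num) trivial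
  have h36901x14 : (3:ℕ) ^ 32206 % 38943534114929 = 7406107594188 := by
    rw [show (32206:ℕ) = 2 * 16103 by norm_num]; exact sq_step h36901x13 (by norm_num) trivial
  have h36901x15 : (3:ℕ) ^ 64413 % 38943534114929 = 9113768212714 := by
    rw [show (64413:ℕ) = 2 * 32206 + 1 by norm_num]; exact sq1_step h36901x14 (by norm_num) trivial
  have h36901x16 : (3:ℕ) ^ 128827 % 38943534114929 = 5602489383247 := by
    rw [show (128827:ℕ) = 2 * 64413 + 1 by norm_num]; exact sq1_step h36901x15 (by norm_num) trivial
  have h36901x17 : (3:ℕ) ^ 257654 % 38943534114929 = 4647057200547 := by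
    rw [show (257654:ℕ) = 2 * 128827 by norm_num]; exact sq_step h36901x16 (by norm_num) trivial
  have h36901x18 : (3:ℕ) ^ 515308 % 38943534114929 = 6616900881393 := by
    rw [show (515308:ℕ) = 2 * 257654 by norm_num]; exact sq_step h36901x17 (by norm_num) trivial
  have h36901x19 : (3:ℕ) ^ 1030616 % 38943534114929 = 17664491654394 := by
    rw [show (1030616:ℕ) = 2 * 515308 by norm_num]; exact sq_step h36901x18 (by norm_num) trivial
  have h36901x20 : (3:ℕ) ^ 2061233 % 38943534114929 = 34684537454866 := by
    rw [show (2061233:ℕ) = 2 * 1030616 + 1 by norm_num]; exact sq1_step h36901x19 (by norm_num) trivial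
  have h36901x21 : (3:ℕ) ^ 4122467 % 38943534114929 = 133271078295 := by
    rw [show (4122467:ℕ) = 2 * 2061233 + 1 by norm_num]; exact sq1_step h36901x20 (by norm_num) trivial
  have h36901x22 : (3:ℕ) ^ 8244935 % 38943534114929 = 15063848614740 := by
    rw [show (8244935:ℕ) = 2 * 4122467 + 1 by norm_num]; exact sq1_step h36901x21 (by norm_num) trivial
  have h36901x23 : (3:ℕ) ^ 16489870 % 38943534114929 = 17285362867529 := by
    rw [show (16489870:ℕ) = 2 * 8244935 by norm_num]; exact sq_step h36901x22 (by norm_num) trivial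
  have h36901x24 : (3:ℕ) ^ 32979741 % 38943534114929 = 26811227873357 := by
    rw [show (32979741:ℕ) = 2 * 16489870 + 1 by norm_num]; exact sq1_step h36901x23 (by norm_num) trivial
  have h36901x25 : (3:ℕ) ^ 65959483 % 38943534114929 = 31068202017859 := by
    rw [show (65959483:ℕ) = 2 * 32979741 + 1 by norm_num]; exact sq1_step h36901x24 (by norm_num) trivial
  have h36901x26 : (3:ℕ) ^ 131918966 % 38943534114929 = 32631307763451 := by
    rw [show (131918966:ℕ) = 2 * 65959483 by norm_num]; exact sq_step h36901x25 (by norm_num) trivial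
  have h36901x27 : (3:ℕ) ^ 263837932 % 38943534114929 = 31726246670047 := by
    rw [show (263837932:ℕ) = 2 * 131918966 by norm_num]; exact sq_step h36901x26 (by norm_num) trivial
  have h36901x28 : (3:ℕ) ^ 527675864 % 38943534114929 = 5610266985870 := by
    rw [show (527675864:ℕ) = 2 * 263837932 by norm_num]; exact sq_step h36901x27 (by norm_num) trivial
  have h36901x29 : (3:ℕ) ^ 1055351728 % 38943534114929 = 18185787626532 := by
    rw [show (1055351728:ℕ) = 2 * 527675864 by norm_num]; exact sq_step h36901x28 (by norm_num) trivial
  have h1081303x0 : (3:ℕ) ^ 1 % 38943534114929 = 3 := by norm_num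
  have h1081303x1 : (3:ℕ) ^ 2 % 38943534114929 = 9 := by
    rw [show (2:ℕ) = 2 * 1 by norm_num]; exact sq_step h1081303x0 (by norm_num) trivial
  have h1081303x2 : (3:ℕ) ^ 4 % 38943534114929 = 81 := by
    rw [show (4:ℕ) = 2 * 2 by norm_num]; exact sq_step h1081303x1 (by norm_num) trivial
  have h1081303x3 : (3:ℕ) ^ 8 % 38943534114929 = 6561 := by
    rw [show (8:ℕ) = 2 * 4 by norm_num]; exact sq_step h1081303x2 (by norm_num) trivial
  have h1081303x4 : (3:ℕ) ^ 17 % 38943534114929 = 129140163 := by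
    rw [show (17:ℕ) = 2 * 8 + 1 by norm_num]; exact sq1_step h1081303x3 (by norm_num) trivial
  have h1081303x5 : (3:ℕ) ^ 34 % 38943534114929 = 9349098476957 := by
    rw [show (34:ℕ) = 2 * 17 by norm_num]; exact sq_step h1081303x4 (by norm_num) trivial
  have h1081303x6 : (3:ℕ) ^ 68 % 38943534114929 = 744523104013 := by
    rw [show (68:ℕ) = 2 * 34 by norm_num]; exact sq_step h1081303x5 (by norm_num) trivial
  have h1081303x7 : (3:ℕ) ^ 137 % 38943534114929 = 18051154707965 := by
    rw [show (137:ℕ) = 2 * 68 + 1 by norm_num]; exact sq1_step h1081303x6 (by norm_num) trivial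
  have h1081303x8 : (3:ℕ) ^ 274 % 38943534114929 = 24253030743953 := by
    rw [show (274:ℕ) = 2 * 137 by norm_num]; exact sq_step h1081303x7 (by norm_num) trivial
  have h1081303x9 : (3:ℕ) ^ 549 % 38943534114929 = 30294336195930 := by
    rw [show (549:ℕ) = 2 * 274 + 1 by norm_num]; exact sq1_step h1081303x8 (by norm_num) trivial
  have h1081303x10 : (3:ℕ) ^ 1099 % 38943534114929 = 18057361430927 := by
    rw [show (1099:ℕ) = 2 * 549 + 1 by norm_num]; exact sq1_step h1081303x9 (by norm_num) trivial
  have h1081303x11 : (3:ℕ) ^ 2198 % 38943534114929 = 31339492284602 := by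
    rw [show (2198:ℕ) = 2 * 1099 by norm_num]; exact sq_step h1081303x10 (by norm_num) trivial
  have h1081303x12 : (3:ℕ) ^ 4396 % 38943534114929 = 17962045654621 := by
    rw [show (4396:ℕ) = 2 * 2198 by norm_num]; exact sq_step h1081303x11 (by norm_num) trivial
  have h1081303x13 : (3:ℕ) ^ 8792 % 38943534114929 = 25841148657142 := by
    rw [show (8792:ℕ) = 2 * 4396 by norm_num]; exact sq_step h1081303x12 (by norm_num) trivial
  have h1081303x14 : (3:ℕ) ^ 17585 % 38943534114929 = 20266640665846 := by
    rw [show (17585:ℕ) = 2 * 8792 + 1 by norm_num]; exact sq1_step h1081303x13 (by norm_num) trivial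
  have h1081303x15 : (3:ℕ) ^ 35171 % 38943534114929 = 11291655077441 := by
    rw [show (35171:ℕ) = 2 * 17585 + 1 by norm_num]; exact sq1_step h1081303x14 (by norm_num) trivial
  have h1081303x16 : (3:ℕ) ^ 70342 % 38943534114929 = 6447878827987 := by
    rw [show (70342:ℕ) = 2 * 35171 by norm_num]; exact sq_step h1081303x15 (by norm_num) trivial
  have h1081303x17 : (3:ℕ) ^ 140685 % 38943534114929 = 23675316921265 := by
    rw [show (140685:ℕ) = 2 * 70342 + 1 by norm_num]; exact sq1_step h1081303x16 (by norm_num) trivial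
  have h1081303x18 : (3:ℕ) ^ 281370 % 38943534114929 = 31782989989129 := by
    rw [show (281370:ℕ) = 2 * 140685 by norm_num]; exact sq_step h1081303x17 (by norm_num) trivial
  have h1081303x19 : (3:ℕ) ^ 562740 % 38943534114929 = 11704204096063 := by
    rw [show (562740:ℕ) = 2 * 281370 by norm_num]; exact sq_step h1081303x18 (by norm_num) trivial
  have h1081303x20 : (3:ℕ) ^ 1125480 % 38943534114929 = 36525236186584 := by
    rw [show (1125480:ℕ) = 2 * 562740 by norm_num]; exact sq_step h1081303x19 (by norm_num) trivial
  have h1081303x21 : (3:ℕ) ^ 2250961 % 38943534114929 = 2078461975811 := by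
    rw [show (2250961:ℕ) = 2 * 1125480 + 1 by norm_num]; exact sq1_step h1081303x20 (by norm_num) trivial
  have h1081303x22 : (3:ℕ) ^ 4501922 % 38943534114929 = 28177746302045 := by
    rw [show (4501922:ℕ) = 2 * 2250961 by norm_num]; exact sq_step h1081303x21 (by norm_num) trivial
  have h1081303x23 : (3:ℕ) ^ 9003844 % 38943534114929 = 27404367316245 := by
    rw [show (9003844:ℕ) = 2 * 4501922 by norm_num]; exact sq_step h1081303x22 (by norm_num) trivial
  have h1081303x24 : (3:ℕ) ^ 18007688 % 38943534114929 = 26197751838008 := by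
    rw [show (18007688:ℕ) = 2 * 9003844 by norm_num]; exact sq_step h1081303x23 (by norm_num) trivial
  have h1081303x25 : (3:ℕ) ^ 36015376 % 38943534114929 = 38179083035237 := by
    rw [show (36015376:ℕ) = 2 * 18007688 by norm_num]; exact sq_step h1081303x24 (by norm_num) trivial
  refine lucas_primality 38943534114929 ((3:ℕ):ZMod 38943534114929) ?_ ?_
  · have hc := natpow_cast ha45
    rw [show (38943534114929:ℕ) - 1 = 38943534114928 by norm_num, hc]
    norm_num
  · intro q hq hdvd
    have hdvd' : q ∣ (2 ^ 4 * 61 * 36901 * 1081303 : ℕ) := by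
      have he : (2 ^ 4 * 61 * 36901 * 1081303 : ℕ) = 38943534114929 - 1 := by norm_num
      rw [he]; exact hdvd
    have hp : ∀ r : ℕ, Nat.Prime r → q ∣ r → q = r := fun r hr hh => (Nat.prime_dvd_prime_iff_eq hq hr).mp hh
    have hcases : q = 2 ∨ q = 61 ∨ q = 36901 ∨ q = 1081303 := by
      rcases hq.dvd_mul.mp hdvd' with h1 | h1
      ·
        rcases hq.dvd_mul.mp h1 with h1 | h1
        ·
          rcases hq.dvd_mul.mp h1 with h1 | h1
          ·
            exact Or.inl (hp 2 (by norm_num) (hq.dvd_of_dvd_pow h1))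
          ·
            exact Or.inr (Or.inl (hp 61 (by norm_num) h1))
        ·
          exact Or.inr (Or.inr (Or.inl (hp 36901 (by norm_num) h1)))
      ·
        exact Or.inr (Or.inr (Or.inr (hp 1081303 (by norm_num) h1)))
    rcases hcases with rfl | rfl | rfl | rfl
    · have hc := natpow_cast h2x44
      rw [show (38943534114929:ℕ) - 1 = 2 * 19471767057464 by norm_num, Nat.mul_div_cancel_left _ (by norm_num : 0 < 2), hc]
      intro hcon
      rw [show (1:ZMod 38943534114929) = ((1:ℕ):ZMod 38943534114929) by norm_num, ZMod.natCast_eq_natCast_iff'] at hcon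
      norm_num at hcon
    · have hc := natpow_cast h61x39
      rw [show (38943534114929:ℕ) - 1 = 61 * 638418592048 by norm_num, Nat.mul_div_cancel_left _ (by norm_num : 0 < 61), hc]
      intro hcon
      rw [show (1:ZMod 38943534114929) = ((1:ℕ):ZMod 38943534114929) by norm_num, ZMod.natCast_eq_natCast_iff'] at hcon
      norm_num at hcon
    · have hc := natpow_cast h36901x29
      rw [show (38943534114929:ℕ) - 1 = 36901 * 1055351728 by norm_num, Nat.mul_div_cancel_left _ (by norm_num : 0 < 36901), hc]
      intro hcon
      rw [show (1:ZMod 38943534114929) = ((1:ℕ):ZMod 38943534114929) by norm_num, ZMod.natCast_eq_natCast_iff'] at hcon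
      norm_num at hcon
    · have hc := natpow_cast h1081303x25
      rw [show (38943534114929:ℕ) - 1 = 1081303 * 36015376 by norm_num, Nat.mul_div_cancel_left _ (by norm_num : 0 < 1081303), hc]
      intro hcon
      rw [show (1:ZMod 38943534114929) = ((1:ℕ):ZMod 38943534114929) by norm_num, ZMod.natCast_eq_natCast_iff'] at hcon
      norm_num at hcon

theorem prime_q : Nat.Prime 38943534374009 := by
  have ha0 : (3:ℕ) ^ 1 % 38943534374009 = 3 := by norm_num
  have ha1 : (3:ℕ) ^ 2 % 38943534374009 = 9 := by
    rw [show (2:ℕ) = 2 * 1 by norm_num]; exact sq_step ha0 (by norm_num) trivial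
  have ha2 : (3:ℕ) ^ 4 % 38943534374009 = 81 := by
    rw [show (4:ℕ) = 2 * 2 by norm_num]; exact sq_step ha1 (by norm_num) trivial
  have ha3 : (3:ℕ) ^ 8 % 38943534374009 = 6561 := by
    rw [show (8:ℕ) = 2 * 4 by norm_num]; exact sq_step ha2 (by norm_num) trivial
  have ha4 : (3:ℕ) ^ 17 % 38943534374009 = 129140163 := by
    rw [show (17:ℕ) = 2 * 8 + 1 by norm_num]; exact sq1_step ha3 (by norm_num) trivial
  have ha5 : (3:ℕ) ^ 35 % 38943534374009 = 28046962772151 := by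
    rw [show (35:ℕ) = 2 * 17 + 1 by norm_num]; exact sq1_step ha4 (by norm_num) trivial
  have ha6 : (3:ℕ) ^ 70 % 38943534374009 = 1135403705158 := by
    rw [show (70:ℕ) = 2 * 35 by norm_num]; exact sq_step ha5 (by norm_num) trivial
  have ha7 : (3:ℕ) ^ 141 % 38943534374009 = 9842898436414 := by
    rw [show (141:ℕ) = 2 * 70 + 1 by norm_num]; exact sq1_step ha6 (by norm_num) trivial
  have ha8 : (3:ℕ) ^ 283 % 38943534374009 = 29128238059075 := by
    rw [show (283:ℕ) = 2 * 141 + 1 by norm_num]; exact sq1_step ha7 (by norm_num) trivial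
  have ha9 : (3:ℕ) ^ 566 % 38943534374009 = 26037729271884 := by
    rw [show (566:ℕ) = 2 * 283 by norm_num]; exact sq_step ha8 (by norm_num) trivial
  have ha10 : (3:ℕ) ^ 1133 % 38943534374009 = 4445587643905 := by
    rw [show (1133:ℕ) = 2 * 566 + 1 by norm_num]; exact sq1_step ha9 (by norm_num) trivial
  have ha11 : (3:ℕ) ^ 2266 % 38943534374009 = 21343072479810 := by
    rw [show (2266:ℕ) = 2 * 1133 by norm_num]; exact sq_step ha10 (by norm_num) trivial
  have ha12 : (3:ℕ) ^ 4533 % 38943534374009 = 21038754738585 := by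
    rw [show (4533:ℕ) = 2 * 2266 + 1 by norm_num]; exact sq1_step ha11 (by norm_num) trivial
  have ha13 : (3:ℕ) ^ 9067 % 38943534374009 = 17786975498553 := by
    rw [show (9067:ℕ) = 2 * 4533 + 1 by norm_num]; exact sq1_step ha12 (by norm_num) trivial
  have ha14 : (3:ℕ) ^ 18134 % 38943534374009 = 11324520869954 := by
    rw [show (18134:ℕ) = 2 * 9067 by norm_num]; exact sq_step ha13 (by norm_num) trivial
  have ha15 : (3:ℕ) ^ 36268 % 38943534374009 = 3328649732927 := by
    rw [show (36268:ℕ) = 2 * 18134 by norm_num]; exact sq_step ha14 (by norm_num) trivial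
  have ha16 : (3:ℕ) ^ 72537 % 38943534374009 = 38802804594528 := by
    rw [show (72537:ℕ) = 2 * 36268 + 1 by norm_num]; exact sq1_step ha15 (by norm_num) trivial
  have ha17 : (3:ℕ) ^ 145075 % 38943534374009 = 23003098577502 := by
    rw [show (145075:ℕ) = 2 * 72537 + 1 by norm_num]; exact sq1_step ha16 (by norm_num) trivial
  have ha18 : (3:ℕ) ^ 290151 % 38943534374009 = 4601264918541 := by
    rw [show (290151:ℕ) = 2 * 145075 + 1 by norm_num]; exact sq1_step ha17 (by norm_num) trivial
  have ha19 : (3:ℕ) ^ 580303 % 38943534374009 = 26472048185290 := by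
    rw [show (580303:ℕ) = 2 * 290151 + 1 by norm_num]; exact sq1_step ha18 (by norm_num) trivial
  have ha20 : (3:ℕ) ^ 1160607 % 38943534374009 = 38732412558613 := by
    rw [show (1160607:ℕ) = 2 * 580303 + 1 by norm_num]; exact sq1_step ha19 (by norm_num) trivial
  have ha21 : (3:ℕ) ^ 2321215 % 38943534374009 = 22244346296701 := by
    rw [show (2321215:ℕ) = 2 * 1160607 + 1 by norm_num]; exact sq1_step ha20 (by norm_num) trivial
  have ha22 : (3:ℕ) ^ 4642431 % 38943534374009 = 25023448159218 := by
    rw [show (4642431:ℕ) = 2 * 2321215 + 1 by norm_num]; exact sq1_step ha21 (by norm_num) trivial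
  have ha23 : (3:ℕ) ^ 9284862 % 38943534374009 = 8623043421797 := by
    rw [show (9284862:ℕ) = 2 * 4642431 by norm_num]; exact sq_step ha22 (by norm_num) trivial
  have ha24 : (3:ℕ) ^ 18569724 % 38943534374009 = 34695978994163 := by
    rw [show (18569724:ℕ) = 2 * 9284862 by norm_num]; exact sq_step ha23 (by norm_num) trivial
  have ha25 : (3:ℕ) ^ 37139448 % 38943534374009 = 25045054078126 := by
    rw [show (37139448:ℕ) = 2 * 18569724 by norm_num]; exact sq_step ha24 (by norm_num) trivial
  have ha26 : (3:ℕ) ^ 74278897 % 38943534374009 = 27777696372237 := by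
    rw [show (74278897:ℕ) = 2 * 37139448 + 1 by norm_num]; exact sq1_step ha25 (by norm_num) trivial
  have ha27 : (3:ℕ) ^ 148557794 % 38943534374009 = 30505450750368 := by
    rw [show (148557794:ℕ) = 2 * 74278897 by norm_num]; exact sq_step ha26 (by norm_num) trivial
  have ha28 : (3:ℕ) ^ 297115588 % 38943534374009 = 35105146494361 := by
    rw [show (297115588:ℕ) = 2 * 148557794 by norm_num]; exact sq_step ha27 (by norm_num) trivial
  have ha29 : (3:ℕ) ^ 594231176 % 38943534374009 = 23770710549805 := by
    rw [show (594231176:ℕ) = 2 * 297115588 by norm_num]; exact sq_step ha28 (by norm_num) trivial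
  have ha30 : (3:ℕ) ^ 1188462352 % 38943534374009 = 4175797874669 := by
    rw [show (1188462352:ℕ) = 2 * 594231176 by norm_num]; exact sq_step ha29 (by norm_num) trivial
  have ha31 : (3:ℕ) ^ 2376924705 % 38943534374009 = 4600078355619 := by
    rw [show (2376924705:ℕ) = 2 * 1188462352 + 1 by norm_num]; exact sq1_step ha30 (by norm_num) trivial
  have ha32 : (3:ℕ) ^ 4753849410 % 38943534374009 = 14162233000247 := by
    rw [show (4753849410:ℕ) = 2 * 2376924705 by norm_num]; exact sq_step ha31 (by norm_num) trivial
  have ha33 : (3:ℕ) ^ 9507698821 % 38943534374009 = 10442862263444 := by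
    rw [show (9507698821:ℕ) = 2 * 4753849410 + 1 by norm_num]; exact sq1_step ha32 (by norm_num) trivial
  have ha34 : (3:ℕ) ^ 19015397643 % 38943534374009 = 23748813180522 := by
    rw [show (19015397643:ℕ) = 2 * 9507698821 + 1 by norm_num]; exact sq1_step ha33 (by norm_num) trivial
  have ha35 : (3:ℕ) ^ 38030795287 % 38943534374009 = 3262949206879 := by
    rw [show (38030795287:ℕ) = 2 * 19015397643 + 1 by norm_num]; exact sq1_step ha34 (by norm_num) trivial
  have ha36 : (3:ℕ) ^ 76061590574 % 38943534374009 = 19831498310510 := by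
    rw [show (76061590574:ℕ) = 2 * 38030795287 by norm_num]; exact sq_step ha35 (by norm_num) trivial
  have ha37 : (3:ℕ) ^ 152123181148 % 38943534374009 = 19020693137424 := by
    rw [show (152123181148:ℕ) = 2 * 76061590574 by norm_num]; exact sq_step ha36 (by norm_num) trivial
  have ha38 : (3:ℕ) ^ 304246362296 % 38943534374009 = 10865516468762 := by
    rw [show (304246362296:ℕ) = 2 * 152123181148 by norm_num]; exact sq_step ha37 (by norm_num) trivial
  have ha39 : (3:ℕ) ^ 608492724593 % 38943534374009 = 17911342909479 := by
    rw [show (608492724593:ℕ) = 2 * 304246362296 + 1 by norm_num]; exact sq1_step ha38 (by norm_num) trivial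
  have ha40 : (3:ℕ) ^ 1216985449187 % 38943534374009 = 25198031536026 := by
    rw [show (1216985449187:ℕ) = 2 * 608492724593 + 1 by norm_num]; exact sq1_step ha39 (by norm_num) trivial
  have ha41 : (3:ℕ) ^ 2433970898375 % 38943534374009 = 9758008015498 := by
    rw [show (2433970898375:ℕ) = 2 * 1216985449187 + 1 by norm_num]; exact sq1_step ha40 (by norm_num) trivial
  have ha42 : (3:ℕ) ^ 4867941796751 % 38943534374009 = 20581473911857 := by
    rw [show (4867941796751:ℕ) = 2 * 2433970898375 + 1 by norm_num]; exact sq1_step ha41 (by norm_num) trivial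
  have ha43 : (3:ℕ) ^ 9735883593502 % 38943534374009 = 17928407107744 := by
    rw [show (9735883593502:ℕ) = 2 * 4867941796751 by norm_num]; exact sq_step ha42 (by norm_num) trivial
  have ha44 : (3:ℕ) ^ 19471767187004 % 38943534374009 = 38943534374008 := by
    rw [show (19471767187004:ℕ) = 2 * 9735883593502 by norm_num]; exact sq_step ha43 (by norm_num) trivial
  have ha45 : (3:ℕ) ^ 38943534374008 % 38943534374009 = 1 := by
    rw [show (38943534374008:ℕ) = 2 * 19471767187004 by norm_num]; exact sq_step ha44 (by norm_num) trivial
  have h2x0 : (3:ℕ) ^ 1 % 38943534374009 = 3 := by norm_num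
  have h2x1 : (3:ℕ) ^ 2 % 38943534374009 = 9 := by
    rw [show (2:ℕ) = 2 * 1 by norm_num]; exact sq_step h2x0 (by norm_num) trivial
  have h2x2 : (3:ℕ) ^ 4 % 38943534374009 = 81 := by
    rw [show (4:ℕ) = 2 * 2 by norm_num]; exact sq_step h2x1 (by norm_num) trivial
  have h2x3 : (3:ℕ) ^ 8 % 38943534374009 = 6561 := by
    rw [show (8:ℕ) = 2 * 4 by norm_num]; exact sq_step h2x2 (by norm_num) trivial
  have h2x4 : (3:ℕ) ^ 17 % 38943534374009 = 129140163 := by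
    rw [show (17:ℕ) = 2 * 8 + 1 by norm_num]; exact sq1_step h2x3 (by norm_num) trivial
  have h2x5 : (3:ℕ) ^ 35 % 38943534374009 = 28046962772151 := by
    rw [show (35:ℕ) = 2 * 17 + 1 by norm_num]; exact sq1_step h2x4 (by norm_num) trivial
  have h2x6 : (3:ℕ) ^ 70 % 38943534374009 = 1135403705158 := by
    rw [show (70:ℕ) = 2 * 35 by norm_num]; exact sq_step h2x5 (by norm_num) trivial
  have h2x7 : (3:ℕ) ^ 141 % 38943534374009 = 9842898436414 := by
    rw [show (141:ℕ) = 2 * 70 + 1 by norm_num]; exact sq1_step h2x6 (by norm_num) trivial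
  have h2x8 : (3:ℕ) ^ 283 % 38943534374009 = 29128238059075 := by
    rw [show (283:ℕ) = 2 * 141 + 1 by norm_num]; exact sq1_step h2x7 (by norm_num) trivial
  have h2x9 : (3:ℕ) ^ 566 % 38943534374009 = 26037729271884 := by
    rw [show (566:ℕ) = 2 * 283 by norm_num]; exact sq_step h2x8 (by norm_num) trivial
  have h2x10 : (3:ℕ) ^ 1133 % 38943534374009 = 4445587643905 := by
    rw [show (1133:ℕ) = 2 * 566 + 1 by norm_num]; exact sq1_step h2x9 (by norm_num) trivial
  have h2x11 : (3:ℕ) ^ 2266 % 38943534374009 = 21343072479810 := by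
    rw [show (2266:ℕ) = 2 * 1133 by norm_num]; exact sq_step h2x10 (by norm_num) trivial
  have h2x12 : (3:ℕ) ^ 4533 % 38943534374009 = 21038754738585 := by
    rw [show (4533:ℕ) = 2 * 2266 + 1 by norm_num]; exact sq1_step h2x11 (by norm_num) trivial
  have h2x13 : (3:ℕ) ^ 9067 % 38943534374009 = 17786975498553 := by
    rw [show (9067:ℕ) = 2 * 4533 + 1 by norm_num]; exact sq1_step h2x12 (by norm_num) trivial
  have h2x14 : (3:ℕ) ^ 18134 % 38943534374009 = 11324520869954 := by
    rw [show (18134:ℕ) = 2 * 9067 by norm_num]; exact sq_step h2x13 (by norm_num) trivial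
  have h2x15 : (3:ℕ) ^ 36268 % 38943534374009 = 3328649732927 := by
    rw [show (36268:ℕ) = 2 * 18134 by norm_num]; exact sq_step h2x14 (by norm_num) trivial
  have h2x16 : (3:ℕ) ^ 72537 % 38943534374009 = 38802804594528 := by
    rw [show (72537:ℕ) = 2 * 36268 + 1 by norm_num]; exact sq1_step h2x15 (by norm_num) trivial
  have h2x17 : (3:ℕ) ^ 145075 % 38943534374009 = 23003098577502 := by
    rw [show (145075:ℕ) = 2 * 72537 + 1 by norm_num]; exact sq1_step h2x16 (by norm_num) trivial
  have h2x18 : (3:ℕ) ^ 290151 % 38943534374009 = 4601264918541 := by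
    rw [show (290151:ℕ) = 2 * 145075 + 1 by norm_num]; exact sq1_step h2x17 (by norm_num) trivial
  have h2x19 : (3:ℕ) ^ 580303 % 38943534374009 = 26472048185290 := by
    rw [show (580303:ℕ) = 2 * 290151 + 1 by norm_num]; exact sq1_step h2x18 (by norm_num) trivial
  have h2x20 : (3:ℕ) ^ 1160607 % 38943534374009 = 38732412558613 := by
    rw [show (1160607:ℕ) = 2 * 580303 + 1 by norm_num]; exact sq1_step h2x19 (by norm_num) trivial
  have h2x21 : (3:ℕ) ^ 2321215 % 38943534374009 = 22244346296701 := by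
    rw [show (2321215:ℕ) = 2 * 1160607 + 1 by norm_num]; exact sq1_step h2x20 (by norm_num) trivial
  have h2x22 : (3:ℕ) ^ 4642431 % 38943534374009 = 25023448159218 := by
    rw [show (4642431:ℕ) = 2 * 2321215 + 1 by norm_num]; exact sq1_step h2x21 (by norm_num) trivial
  have h2x23 : (3:ℕ) ^ 9284862 % 38943534374009 = 8623043421797 := by
    rw [show (9284862:ℕ) = 2 * 4642431 by norm_num]; exact sq_step h2x22 (by norm_num) trivial
  have h2x24 : (3:ℕ) ^ 18569724 % 38943534374009 = 34695978994163 := by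
    rw [show (18569724:ℕ) = 2 * 9284862 by norm_num]; exact sq_step h2x23 (by norm_num) trivial
  have h2x25 : (3:ℕ) ^ 37139448 % 38943534374009 = 25045054078126 := by
    rw [show (37139448:ℕ) = 2 * 18569724 by norm_num]; exact sq_step h2x24 (by norm_num) trivial
  have h2x26 : (3:ℕ) ^ 74278897 % 38943534374009 = 27777696372237 := by
    rw [show (74278897:ℕ) = 2 * 37139448 + 1 by norm_num]; exact sq1_step h2x25 (by norm_num) trivial
  have h2x27 : (3:ℕ) ^ 148557794 % 38943534374009 = 30505450750368 := by
    rw [show (148557794:ℕ) = 2 * 74278897 by norm_num]; exact sq_step h2x26 (by norm_num) trivial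
  have h2x28 : (3:ℕ) ^ 297115588 % 38943534374009 = 35105146494361 := by
    rw [show (297115588:ℕ) = 2 * 148557794 by norm_num]; exact sq_step h2x27 (by norm_num) trivial
  have h2x29 : (3:ℕ) ^ 594231176 % 38943534374009 = 23770710549805 := by
    rw [show (594231176:ℕ) = 2 * 297115588 by norm_num]; exact sq_step h2x28 (by norm_num) trivial
  have h2x30 : (3:ℕ) ^ 1188462352 % 38943534374009 = 4175797874669 := by
    rw [show (1188462352:ℕ) = 2 * 594231176 by norm_num]; exact sq_step h2x29 (by norm_num) trivial
  have h2x31 : (3:ℕ) ^ 2376924705 % 38943534374009 = 4600078355619 := by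
    rw [show (2376924705:ℕ) = 2 * 1188462352 + 1 by norm_num]; exact sq1_step h2x30 (by norm_num) trivial
  have h2x32 : (3:ℕ) ^ 4753849410 % 38943534374009 = 14162233000247 := by
    rw [show (4753849410:ℕ) = 2 * 2376924705 by norm_num]; exact sq_step h2x31 (by norm_num) trivial
  have h2x33 : (3:ℕ) ^ 9507698821 % 38943534374009 = 10442862263444 := by
    rw [show (9507698821:ℕ) = 2 * 4753849410 + 1 by norm_num]; exact sq1_step h2x32 (by norm_num) trivial
  have h2x34 : (3:ℕ) ^ 19015397643 % 38943534374009 = 23748813180522 := by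
    rw [show (19015397643:ℕ) = 2 * 9507698821 + 1 by norm_num]; exact sq1_step h2x33 (by norm_num) trivial
  have h2x35 : (3:ℕ) ^ 38030795287 % 38943534374009 = 3262949206879 := by
    rw [show (38030795287:ℕ) = 2 * 19015397643 + 1 by norm_num]; exact sq1_step h2x34 (by norm_num) trivial
  have h2x36 : (3:ℕ) ^ 76061590574 % 38943534374009 = 19831498310510 := by
    rw [show (76061590574:ℕ) = 2 * 38030795287 by norm_num]; exact sq_step h2x35 (by norm_num) trivial
  have h2x37 : (3:ℕ) ^ 152123181148 % 38943534374009 = 19020693137424 := by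
    rw [show (152123181148:ℕ) = 2 * 76061590574 by norm_num]; exact sq_step h2x36 (by norm_num) trivial
  have h2x38 : (3:ℕ) ^ 304246362296 % 38943534374009 = 10865516468762 := by
    rw [show (304246362296:ℕ) = 2 * 152123181148 by norm_num]; exact sq_step h2x37 (by norm_num) trivial
  have h2x39 : (3:ℕ) ^ 608492724593 % 38943534374009 = 17911342909479 := by
    rw [show (608492724593:ℕ) = 2 * 304246362296 + 1 by norm_num]; exact sq1_step h2x38 (by norm_num) trivial
  have h2x40 : (3:ℕ) ^ 1216985449187 % 38943534374009 = 25198031536026 := by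
    rw [show (1216985449187:ℕ) = 2 * 608492724593 + 1 by norm_num]; exact sq1_step h2x39 (by norm_num) trivial
  have h2x41 : (3:ℕ) ^ 2433970898375 % 38943534374009 = 9758008015498 := by
    rw [show (2433970898375:ℕ) = 2 * 1216985449187 + 1 by norm_num]; exact sq1_step h2x40 (by norm_num) trivial
  have h2x42 : (3:ℕ) ^ 4867941796751 % 38943534374009 = 20581473911857 := by
    rw [show (4867941796751:ℕ) = 2 * 2433970898375 + 1 by norm_num]; exact sq1_step h2x41 (by norm_num) trivial
  have h2x43 : (3:ℕ) ^ 9735883593502 % 38943534374009 = 17928407107744 := by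
    rw [show (9735883593502:ℕ) = 2 * 4867941796751 by norm_num]; exact sq_step h2x42 (by norm_num) trivial
  have h2x44 : (3:ℕ) ^ 19471767187004 % 38943534374009 = 38943534374008 := by
    rw [show (19471767187004:ℕ) = 2 * 9735883593502 by norm_num]; exact sq_step h2x43 (by norm_num) trivial
  have h11x0 : (3:ℕ) ^ 1 % 38943534374009 = 3 := by norm_num
  have h11x1 : (3:ℕ) ^ 3 % 38943534374009 = 27 := by
    rw [show (3:ℕ) = 2 * 1 + 1 by norm_num]; exact sq1_step h11x0 (by norm_num) trivial
  have h11x2 : (3:ℕ) ^ 6 % 38943534374009 = 729 := by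
    rw [show (6:ℕ) = 2 * 3 by norm_num]; exact sq_step h11x1 (by norm_num) trivial
  have h11x3 : (3:ℕ) ^ 12 % 38943534374009 = 531441 := by
    rw [show (12:ℕ) = 2 * 6 by norm_num]; exact sq_step h11x2 (by norm_num) trivial
  have h11x4 : (3:ℕ) ^ 25 % 38943534374009 = 847288609443 := by
    rw [show (25:ℕ) = 2 * 12 + 1 by norm_num]; exact sq1_step h11x3 (by norm_num) trivial
  have h11x5 : (3:ℕ) ^ 51 % 38943534374009 = 31018615582340 := by
    rw [show (51:ℕ) = 2 * 25 + 1 by norm_num]; exact sq1_step h11x4 (by norm_num) trivial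
  have h11x6 : (3:ℕ) ^ 103 % 38943534374009 = 37778406348630 := by
    rw [show (103:ℕ) = 2 * 51 + 1 by norm_num]; exact sq1_step h11x5 (by norm_num) trivial
  have h11x7 : (3:ℕ) ^ 206 % 38943534374009 = 32172174182289 := by
    rw [show (206:ℕ) = 2 * 103 by norm_num]; exact sq_step h11x6 (by norm_num) trivial
  have h11x8 : (3:ℕ) ^ 412 % 38943534374009 = 8719711388808 := by
    rw [show (412:ℕ) = 2 * 206 by norm_num]; exact sq_step h11x7 (by norm_num) trivial
  have h11x9 : (3:ℕ) ^ 824 % 38943534374009 = 29895716399393 := by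
    rw [show (824:ℕ) = 2 * 412 by norm_num]; exact sq_step h11x8 (by norm_num) trivial
  have h11x10 : (3:ℕ) ^ 1648 % 38943534374009 = 7024914935394 := by
    rw [show (1648:ℕ) = 2 * 824 by norm_num]; exact sq_step h11x9 (by norm_num) trivial
  have h11x11 : (3:ℕ) ^ 3297 % 38943534374009 = 28043952942774 := by
    rw [show (3297:ℕ) = 2 * 1648 + 1 by norm_num]; exact sq1_step h11x10 (by norm_num) trivial
  have h11x12 : (3:ℕ) ^ 6594 % 38943534374009 = 16711663640512 := by
    rw [show (6594:ℕ) = 2 * 3297 by norm_num]; exact sq_step h11x11 (by norm_num) trivial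
  have h11x13 : (3:ℕ) ^ 13188 % 38943534374009 = 31659668879371 := by
    rw [show (13188:ℕ) = 2 * 6594 by norm_num]; exact sq_step h11x12 (by norm_num) trivial
  have h11x14 : (3:ℕ) ^ 26377 % 38943534374009 = 37516163818454 := by
    rw [show (26377:ℕ) = 2 * 13188 + 1 by norm_num]; exact sq1_step h11x13 (by norm_num) trivial
  have h11x15 : (3:ℕ) ^ 52754 % 38943534374009 = 22530864439064 := by
    rw [show (52754:ℕ) = 2 * 26377 by norm_num]; exact sq_step h11x14 (by norm_num) trivial
  have h11x16 : (3:ℕ) ^ 105509 % 38943534374009 = 3809910688925 := by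
    rw [show (105509:ℕ) = 2 * 52754 + 1 by norm_num]; exact sq1_step h11x15 (by norm_num) trivial
  have h11x17 : (3:ℕ) ^ 211019 % 38943534374009 = 20610438606140 := by
    rw [show (211019:ℕ) = 2 * 105509 + 1 by norm_num]; exact sq1_step h11x16 (by norm_num) trivial
  have h11x18 : (3:ℕ) ^ 422039 % 38943534374009 = 1516098076621 := by
    rw [show (422039:ℕ) = 2 * 211019 + 1 by norm_num]; exact sq1_step h11x17 (by norm_num) trivial
  have h11x19 : (3:ℕ) ^ 844078 % 38943534374009 = 36841559889455 := by
    rw [show (844078:ℕ) = 2 * 422039 by norm_num]; exact sq_step h11x18 (by norm_num) trivial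
  have h11x20 : (3:ℕ) ^ 1688156 % 38943534374009 = 11442271851732 := by
    rw [show (1688156:ℕ) = 2 * 844078 by norm_num]; exact sq_step h11x19 (by norm_num) trivial
  have h11x21 : (3:ℕ) ^ 3376313 % 38943534374009 = 32000484349816 := by
    rw [show (3376313:ℕ) = 2 * 1688156 + 1 by norm_num]; exact sq1_step h11x20 (by norm_num) trivial
  have h11x22 : (3:ℕ) ^ 6752627 % 38943534374009 = 38894379350229 := by
    rw [show (6752627:ℕ) = 2 * 3376313 + 1 by norm_num]; exact sq1_step h11x21 (by norm_num) trivial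
  have h11x23 : (3:ℕ) ^ 13505254 % 38943534374009 = 16475585561545 := by
    rw [show (13505254:ℕ) = 2 * 6752627 by norm_num]; exact sq_step h11x22 (by norm_num) trivial
  have h11x24 : (3:ℕ) ^ 27010508 % 38943534374009 = 11850257904951 := by
    rw [show (27010508:ℕ) = 2 * 13505254 by norm_num]; exact sq_step h11x23 (by norm_num) trivial
  have h11x25 : (3:ℕ) ^ 54021016 % 38943534374009 = 16629341214918 := by
    rw [show (54021016:ℕ) = 2 * 27010508 by norm_num]; exact sq_step h11x24 (by norm_num) trivial
  have h11x26 : (3:ℕ) ^ 108042032 % 38943534374009 = 12020356639552 := by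
    rw [show (108042032:ℕ) = 2 * 54021016 by norm_num]; exact sq_step h11x25 (by norm_num) trivial
  have h11x27 : (3:ℕ) ^ 216084064 % 38943534374009 = 12469845377630 := by
    rw [show (216084064:ℕ) = 2 * 108042032 by norm_num]; exact sq_step h11x26 (by norm_num) trivial
  have h11x28 : (3:ℕ) ^ 432168128 % 38943534374009 = 925447045100 := by
    rw [show (432168128:ℕ) = 2 * 216084064 by norm_num]; exact sq_step h11x27 (by norm_num) trivial
  have h11x29 : (3:ℕ) ^ 864336256 % 38943534374009 = 26420693711529 := by
    rw [show (864336256:ℕ) = 2 * 432168128 by norm_num]; exact sq_step h11x28 (by norm_num) trivial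
  have h11x30 : (3:ℕ) ^ 1728672513 % 38943534374009 = 1927333310161 := by
    rw [show (1728672513:ℕ) = 2 * 864336256 + 1 by norm_num]; exact sq1_step h11x29 (by norm_num) trivial
  have h11x31 : (3:ℕ) ^ 3457345026 % 38943534374009 = 24435095542553 := by
    rw [show (3457345026:ℕ) = 2 * 1728672513 by norm_num]; exact sq_step h11x30 (by norm_num) trivial
  have h11x32 : (3:ℕ) ^ 6914690052 % 38943534374009 = 7383246275412 := by
    rw [show (6914690052:ℕ) = 2 * 3457345026 by norm_num]; exact sq_step h11x31 (by norm_num) trivial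
  have h11x33 : (3:ℕ) ^ 13829380104 % 38943534374009 = 36463220994457 := by
    rw [show (13829380104:ℕ) = 2 * 6914690052 by norm_num]; exact sq_step h11x32 (by norm_num) trivial
  have h11x34 : (3:ℕ) ^ 27658760208 % 38943534374009 = 27374913060555 := by
    rw [show (27658760208:ℕ) = 2 * 13829380104 by norm_num]; exact sq_step h11x33 (by norm_num) trivial
  have h11x35 : (3:ℕ) ^ 55317520417 % 38943534374009 = 20097220580712 := by
    rw [show (55317520417:ℕ) = 2 * 27658760208 + 1 by norm_num]; exact sq1_step h11x34 (by norm_num) trivial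
  have h11x36 : (3:ℕ) ^ 110635040835 % 38943534374009 = 1248980558453 := by
    rw [show (110635040835:ℕ) = 2 * 55317520417 + 1 by norm_num]; exact sq1_step h11x35 (by norm_num) trivial
  have h11x37 : (3:ℕ) ^ 221270081670 % 38943534374009 = 27920486702678 := by
    rw [show (221270081670:ℕ) = 2 * 110635040835 by norm_num]; exact sq_step h11x36 (by norm_num) trivial
  have h11x38 : (3:ℕ) ^ 442540163341 % 38943534374009 = 33910972764495 := by
    rw [show (442540163341:ℕ) = 2 * 221270081670 + 1 by norm_num]; exact sq1_step h11x37 (by norm_num) trivial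
  have h11x39 : (3:ℕ) ^ 885080326682 % 38943534374009 = 26925447327628 := by
    rw [show (885080326682:ℕ) = 2 * 442540163341 by norm_num]; exact sq_step h11x38 (by norm_num) trivial
  have h11x40 : (3:ℕ) ^ 1770160653364 % 38943534374009 = 16074406864508 := by
    rw [show (1770160653364:ℕ) = 2 * 885080326682 by norm_num]; exact sq_step h11x39 (by norm_num) trivial
  have h11x41 : (3:ℕ) ^ 3540321306728 % 38943534374009 = 7244641655518 := by
    rw [show (3540321306728:ℕ) = 2 * 1770160653364 by norm_num]; exact sq_step h11x40 (by norm_num) trivial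
  have h23x0 : (3:ℕ) ^ 1 % 38943534374009 = 3 := by norm_num
  have h23x1 : (3:ℕ) ^ 3 % 38943534374009 = 27 := by
    rw [show (3:ℕ) = 2 * 1 + 1 by norm_num]; exact sq1_step h23x0 (by norm_num) trivial
  have h23x2 : (3:ℕ) ^ 6 % 38943534374009 = 729 := by
    rw [show (6:ℕ) = 2 * 3 by norm_num]; exact sq_step h23x1 (by norm_num) trivial
  have h23x3 : (3:ℕ) ^ 12 % 38943534374009 = 531441 := by
    rw [show (12:ℕ) = 2 * 6 by norm_num]; exact sq_step h23x2 (by norm_num) trivial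
  have h23x4 : (3:ℕ) ^ 24 % 38943534374009 = 282429536481 := by
    rw [show (24:ℕ) = 2 * 12 by norm_num]; exact sq_step h23x3 (by norm_num) trivial
  have h23x5 : (3:ℕ) ^ 49 % 38943534374009 = 12100631592262 := by
    rw [show (49:ℕ) = 2 * 24 + 1 by norm_num]; exact sq1_step h23x4 (by norm_num) trivial
  have h23x6 : (3:ℕ) ^ 98 % 38943534374009 = 32368019816973 := by
    rw [show (98:ℕ) = 2 * 49 by norm_num]; exact sq_step h23x5 (by norm_num) trivial
  have h23x7 : (3:ℕ) ^ 197 % 38943534374009 = 37526558203101 := by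
    rw [show (197:ℕ) = 2 * 98 + 1 by norm_num]; exact sq1_step h23x6 (by norm_num) trivial
  have h23x8 : (3:ℕ) ^ 394 % 38943534374009 = 13116746046340 := by
    rw [show (394:ℕ) = 2 * 197 by norm_num]; exact sq_step h23x7 (by norm_num) trivial
  have h23x9 : (3:ℕ) ^ 788 % 38943534374009 = 23037867830513 := by
    rw [show (788:ℕ) = 2 * 394 by norm_num]; exact sq_step h23x8 (by norm_num) trivial
  have h23x10 : (3:ℕ) ^ 1576 % 38943534374009 = 1535332601464 := by
    rw [show (1576:ℕ) = 2 * 788 by norm_num]; exact sq_step h23x9 (by norm_num) trivial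
  have h23x11 : (3:ℕ) ^ 3153 % 38943534374009 = 32791470223154 := by
    rw [show (3153:ℕ) = 2 * 1576 + 1 by norm_num]; exact sq1_step h23x10 (by norm_num) trivial
  have h23x12 : (3:ℕ) ^ 6307 % 38943534374009 = 28153361403777 := by
    rw [show (6307:ℕ) = 2 * 3153 + 1 by norm_num]; exact sq1_step h23x11 (by norm_num) trivial
  have h23x13 : (3:ℕ) ^ 12615 % 38943534374009 = 10196618679441 := by
    rw [show (12615:ℕ) = 2 * 6307 + 1 by norm_num]; exact sq1_step h23x12 (by norm_num) trivial
  have h23x14 : (3:ℕ) ^ 25230 % 38943534374009 = 22711603322109 := by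
    rw [show (25230:ℕ) = 2 * 12615 by norm_num]; exact sq_step h23x13 (by norm_num) trivial
  have h23x15 : (3:ℕ) ^ 50461 % 38943534374009 = 22439624637839 := by
    rw [show (50461:ℕ) = 2 * 25230 + 1 by norm_num]; exact sq1_step h23x14 (by norm_num) trivial
  have h23x16 : (3:ℕ) ^ 100922 % 38943534374009 = 24708011860934 := by
    rw [show (100922:ℕ) = 2 * 50461 by norm_num]; exact sq_step h23x15 (by norm_num) trivial
  have h23x17 : (3:ℕ) ^ 201844 % 38943534374009 = 33573341108913 := by
    rw [show (201844:ℕ) = 2 * 100922 by norm_num]; exact sq_step h23x16 (by norm_num) trivial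
  have h23x18 : (3:ℕ) ^ 403689 % 38943534374009 = 11568061471424 := by
    rw [show (403689:ℕ) = 2 * 201844 + 1 by norm_num]; exact sq1_step h23x17 (by norm_num) trivial
  have h23x19 : (3:ℕ) ^ 807379 % 38943534374009 = 832887485443 := by
    rw [show (807379:ℕ) = 2 * 403689 + 1 by norm_num]; exact sq1_step h23x18 (by norm_num) trivial
  have h23x20 : (3:ℕ) ^ 1614758 % 38943534374009 = 23407382843140 := by
    rw [show (1614758:ℕ) = 2 * 807379 by norm_num]; exact sq_step h23x19 (by norm_num) trivial
  have h23x21 : (3:ℕ) ^ 3229517 % 38943534374009 = 20377685508604 := by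
    rw [show (3229517:ℕ) = 2 * 1614758 + 1 by norm_num]; exact sq1_step h23x20 (by norm_num) trivial
  have h23x22 : (3:ℕ) ^ 6459034 % 38943534374009 = 25435422850516 := by
    rw [show (6459034:ℕ) = 2 * 3229517 by norm_num]; exact sq_step h23x21 (by norm_num) trivial
  have h23x23 : (3:ℕ) ^ 12918069 % 38943534374009 = 19287309130132 := by
    rw [show (12918069:ℕ) = 2 * 6459034 + 1 by norm_num]; exact sq1_step h23x22 (by norm_num) trivial
  have h23x24 : (3:ℕ) ^ 25836138 % 38943534374009 = 4568208345953 := by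
    rw [show (25836138:ℕ) = 2 * 12918069 by norm_num]; exact sq_step h23x23 (by norm_num) trivial
  have h23x25 : (3:ℕ) ^ 51672276 % 38943534374009 = 16874195774248 := by
    rw [show (51672276:ℕ) = 2 * 25836138 by norm_num]; exact sq_step h23x24 (by norm_num) trivial
  have h23x26 : (3:ℕ) ^ 103344552 % 38943534374009 = 28052288458086 := by
    rw [show (103344552:ℕ) = 2 * 51672276 by norm_num]; exact sq_step h23x25 (by norm_num) trivial
  have h23x27 : (3:ℕ) ^ 206689104 % 38943534374009 = 17528963520939 := by
    rw [show (206689104:ℕ) = 2 * 103344552 by norm_num]; exact sq_step h23x26 (by norm_num) trivial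
  have h23x28 : (3:ℕ) ^ 413378209 % 38943534374009 = 3439053575636 := by
    rw [show (413378209:ℕ) = 2 * 206689104 + 1 by norm_num]; exact sq1_step h23x27 (by norm_num) trivial
  have h23x29 : (3:ℕ) ^ 826756419 % 38943534374009 = 14744149648822 := by
    rw [show (826756419:ℕ) = 2 * 413378209 + 1 by norm_num]; exact sq1_step h23x28 (by norm_num) trivial
  have h23x30 : (3:ℕ) ^ 1653512838 % 38943534374009 = 13655883678379 := by
    rw [show (1653512838:ℕ) = 2 * 826756419 by norm_num]; exact sq_step h23x29 (by norm_num) trivial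
  have h23x31 : (3:ℕ) ^ 3307025677 % 38943534374009 = 7523839675596 := by
    rw [show (3307025677:ℕ) = 2 * 1653512838 + 1 by norm_num]; exact sq1_step h23x30 (by norm_num) trivial
  have h23x32 : (3:ℕ) ^ 6614051354 % 38943534374009 = 303360343191 := by
    rw [show (6614051354:ℕ) = 2 * 3307025677 by norm_num]; exact sq_step h23x31 (by norm_num) trivial
  have h23x33 : (3:ℕ) ^ 13228102708 % 38943534374009 = 2760117345146 := by
    rw [show (13228102708:ℕ) = 2 * 6614051354 by norm_num]; exact sq_step h23x32 (by norm_num) trivial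
  have h23x34 : (3:ℕ) ^ 26456205417 % 38943534374009 = 35161067712222 := by
    rw [show (26456205417:ℕ) = 2 * 13228102708 + 1 by norm_num]; exact sq1_step h23x33 (by norm_num) trivial
  have h23x35 : (3:ℕ) ^ 52912410834 % 38943534374009 = 25364591725712 := by
    rw [show (52912410834:ℕ) = 2 * 26456205417 by norm_num]; exact sq_step h23x34 (by norm_num) trivial
  have h23x36 : (3:ℕ) ^ 105824821668 % 38943534374009 = 17041892166833 := by
    rw [show (105824821668:ℕ) = 2 * 52912410834 by norm_num]; exact sq_step h23x35 (by norm_num) trivial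
  have h23x37 : (3:ℕ) ^ 211649643337 % 38943534374009 = 22711384296527 := by
    rw [show (211649643337:ℕ) = 2 * 105824821668 + 1 by norm_num]; exact sq1_step h23x36 (by norm_num) trivial
  have h23x38 : (3:ℕ) ^ 423299286674 % 38943534374009 = 2876534797402 := by
    rw [show (423299286674:ℕ) = 2 * 211649643337 by norm_num]; exact sq_step h23x37 (by norm_num) trivial
  have h23x39 : (3:ℕ) ^ 846598573348 % 38943534374009 = 5901592394275 := by
    rw [show (846598573348:ℕ) = 2 * 423299286674 by norm_num]; exact sq_step h23x38 (by norm_num) trivial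
  have h23x40 : (3:ℕ) ^ 1693197146696 % 38943534374009 = 1610222975114 := by
    rw [show (1693197146696:ℕ) = 2 * 846598573348 by norm_num]; exact sq_step h23x39 (by norm_num) trivial
  have h8179x0 : (3:ℕ) ^ 1 % 38943534374009 = 3 := by norm_num
  have h8179x1 : (3:ℕ) ^ 2 % 38943534374009 = 9 := by
    rw [show (2:ℕ) = 2 * 1 by norm_num]; exact sq_step h8179x0 (by norm_num) trivial
  have h8179x2 : (3:ℕ) ^ 4 % 38943534374009 = 81 := by
    rw [show (4:ℕ) = 2 * 2 by norm_num]; exact sq_step h8179x1 (by norm_num) trivial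
  have h8179x3 : (3:ℕ) ^ 8 % 38943534374009 = 6561 := by
    rw [show (8:ℕ) = 2 * 4 by norm_num]; exact sq_step h8179x2 (by norm_num) trivial
  have h8179x4 : (3:ℕ) ^ 17 % 38943534374009 = 129140163 := by
    rw [show (17:ℕ) = 2 * 8 + 1 by norm_num]; exact sq1_step h8179x3 (by norm_num) trivial
  have h8179x5 : (3:ℕ) ^ 35 % 38943534374009 = 28046962772151 := by
    rw [show (35:ℕ) = 2 * 17 + 1 by norm_num]; exact sq1_step h8179x4 (by norm_num) trivial
  have h8179x6 : (3:ℕ) ^ 70 % 38943534374009 = 1135403705158 := by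
    rw [show (70:ℕ) = 2 * 35 by norm_num]; exact sq_step h8179x5 (by norm_num) trivial
  have h8179x7 : (3:ℕ) ^ 141 % 38943534374009 = 9842898436414 := by
    rw [show (141:ℕ) = 2 * 70 + 1 by norm_num]; exact sq1_step h8179x6 (by norm_num) trivial
  have h8179x8 : (3:ℕ) ^ 283 % 38943534374009 = 29128238059075 := by
    rw [show (283:ℕ) = 2 * 141 + 1 by norm_num]; exact sq1_step h8179x7 (by norm_num) trivial
  have h8179x9 : (3:ℕ) ^ 567 % 38943534374009 = 226119067634 := by
    rw [show (567:ℕ) = 2 * 283 + 1 by norm_num]; exact sq1_step h8179x8 (by norm_num) trivial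
  have h8179x10 : (3:ℕ) ^ 1135 % 38943534374009 = 1066754421136 := by
    rw [show (1135:ℕ) = 2 * 567 + 1 by norm_num]; exact sq1_step h8179x9 (by norm_num) trivial
  have h8179x11 : (3:ℕ) ^ 2270 % 38943534374009 = 15273358408214 := by
    rw [show (2270:ℕ) = 2 * 1135 by norm_num]; exact sq_step h8179x10 (by norm_num) trivial
  have h8179x12 : (3:ℕ) ^ 4540 % 38943534374009 = 19442517580766 := by
    rw [show (4540:ℕ) = 2 * 2270 by norm_num]; exact sq_step h8179x11 (by norm_num) trivial
  have h8179x13 : (3:ℕ) ^ 9081 % 38943534374009 = 26017719068808 := by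
    rw [show (9081:ℕ) = 2 * 4540 + 1 by norm_num]; exact sq1_step h8179x12 (by norm_num) trivial
  have h8179x14 : (3:ℕ) ^ 18163 % 38943534374009 = 32240169956924 := by
    rw [show (18163:ℕ) = 2 * 9081 + 1 by norm_num]; exact sq1_step h8179x13 (by norm_num) trivial
  have h8179x15 : (3:ℕ) ^ 36326 % 38943534374009 = 38380648950471 := by
    rw [show (36326:ℕ) = 2 * 18163 by norm_num]; exact sq_step h8179x14 (by norm_num) trivial
  have h8179x16 : (3:ℕ) ^ 72653 % 38943534374009 = 718951100539 := by
    rw [show (72653:ℕ) = 2 * 36326 + 1 by norm_num]; exact sq1_step h8179x15 (by norm_num) trivial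
  have h8179x17 : (3:ℕ) ^ 145306 % 38943534374009 = 38570261108847 := by
    rw [show (145306:ℕ) = 2 * 72653 by norm_num]; exact sq_step h8179x16 (by norm_num) trivial
  have h8179x18 : (3:ℕ) ^ 290613 % 38943534374009 = 22362639308534 := by
    rw [show (290613:ℕ) = 2 * 145306 + 1 by norm_num]; exact sq1_step h8179x17 (by norm_num) trivial
  have h8179x19 : (3:ℕ) ^ 581226 % 38943534374009 = 26632721383689 := by
    rw [show (581226:ℕ) = 2 * 290613 by norm_num]; exact sq_step h8179x18 (by norm_num) trivial
  have h8179x20 : (3:ℕ) ^ 1162452 % 38943534374009 = 21781568891302 := by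
    rw [show (1162452:ℕ) = 2 * 581226 by norm_num]; exact sq_step h8179x19 (by norm_num) trivial
  have h8179x21 : (3:ℕ) ^ 2324904 % 38943534374009 = 3507606197735 := by
    rw [show (2324904:ℕ) = 2 * 1162452 by norm_num]; exact sq_step h8179x20 (by norm_num) trivial
  have h8179x22 : (3:ℕ) ^ 4649809 % 38943534374009 = 5592933485478 := by
    rw [show (4649809:ℕ) = 2 * 2324904 + 1 by norm_num]; exact sq1_step h8179x21 (by norm_num) trivial
  have h8179x23 : (3:ℕ) ^ 9299619 % 38943534374009 = 20888772531750 := by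
    rw [show (9299619:ℕ) = 2 * 4649809 + 1 by norm_num]; exact sq1_step h8179x22 (by norm_num) trivial
  have h8179x24 : (3:ℕ) ^ 18599239 % 38943534374009 = 28652948358748 := by
    rw [show (18599239:ℕ) = 2 * 9299619 + 1 by norm_num]; exact sq1_step h8179x23 (by norm_num) trivial
  have h8179x25 : (3:ℕ) ^ 37198479 % 38943534374009 = 15757340069138 := by
    rw [show (37198479:ℕ) = 2 * 18599239 + 1 by norm_num]; exact sq1_step h8179x24 (by norm_num) trivial
  have h8179x26 : (3:ℕ) ^ 74396958 % 38943534374009 = 26987462090461 := by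
    rw [show (74396958:ℕ) = 2 * 37198479 by norm_num]; exact sq_step h8179x25 (by norm_num) trivial
  have h8179x27 : (3:ℕ) ^ 148793917 % 38943534374009 = 26153939768114 := by
    rw [show (148793917:ℕ) = 2 * 74396958 + 1 by norm_num]; exact sq1_step h8179x26 (by norm_num) trivial
  have h8179x28 : (3:ℕ) ^ 297587834 % 38943534374009 = 12998340476098 := by
    rw [show (297587834:ℕ) = 2 * 148793917 by norm_num]; exact sq_step h8179x27 (by norm_num) trivial
  have h8179x29 : (3:ℕ) ^ 595175669 % 38943534374009 = 12364822292738 := by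
    rw [show (595175669:ℕ) = 2 * 297587834 + 1 by norm_num]; exact sq1_step h8179x28 (by norm_num) trivial
  have h8179x30 : (3:ℕ) ^ 1190351338 % 38943534374009 = 8937784207099 := by
    rw [show (1190351338:ℕ) = 2 * 595175669 by norm_num]; exact sq_step h8179x29 (by norm_num) trivial
  have h8179x31 : (3:ℕ) ^ 2380702676 % 38943534374009 = 35739725356893 := by
    rw [show (2380702676:ℕ) = 2 * 1190351338 by norm_num]; exact sq_step h8179x30 (by norm_num) trivial
  have h8179x32 : (3:ℕ) ^ 4761405352 % 38943534374009 = 10977786345402 := by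
    rw [show (4761405352:ℕ) = 2 * 2380702676 by norm_num]; exact sq_step h8179x31 (by norm_num) trivial
  have h2352473x0 : (3:ℕ) ^ 1 % 38943534374009 = 3 := by norm_num
  have h2352473x1 : (3:ℕ) ^ 3 % 38943534374009 = 27 := by
    rw [show (3:ℕ) = 2 * 1 + 1 by norm_num]; exact sq1_step h2352473x0 (by norm_num) trivial
  have h2352473x2 : (3:ℕ) ^ 7 % 38943534374009 = 2187 := by
    rw [show (7:ℕ) = 2 * 3 + 1 by norm_num]; exact sq1_step h2352473x1 (by norm_num) trivial
  have h2352473x3 : (3:ℕ) ^ 15 % 38943534374009 = 14348907 := by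
    rw [show (15:ℕ) = 2 * 7 + 1 by norm_num]; exact sq1_step h2352473x2 (by norm_num) trivial
  have h2352473x4 : (3:ℕ) ^ 31 % 38943534374009 = 33520380673812 := by
    rw [show (31:ℕ) = 2 * 15 + 1 by norm_num]; exact sq1_step h2352473x3 (by norm_num) trivial
  have h2352473x5 : (3:ℕ) ^ 63 % 38943534374009 = 38587916960303 := by
    rw [show (63:ℕ) = 2 * 31 + 1 by norm_num]; exact sq1_step h2352473x4 (by norm_num) trivial
  have h2352473x6 : (3:ℕ) ^ 126 % 38943534374009 = 21388976548461 := by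
    rw [show (126:ℕ) = 2 * 63 by norm_num]; exact sq_step h2352473x5 (by norm_num) trivial
  have h2352473x7 : (3:ℕ) ^ 252 % 38943534374009 = 16886003092938 := by
    rw [show (252:ℕ) = 2 * 126 by norm_num]; exact sq_step h2352473x6 (by norm_num) trivial
  have h2352473x8 : (3:ℕ) ^ 505 % 38943534374009 = 853987813352 := by
    rw [show (505:ℕ) = 2 * 252 + 1 by norm_num]; exact sq1_step h2352473x7 (by norm_num) trivial
  have h2352473x9 : (3:ℕ) ^ 1010 % 38943534374009 = 24493811732392 := by
    rw [show (1010:ℕ) = 2 * 505 by norm_num]; exact sq_step h2352473x8 (by norm_num) trivial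
  have h2352473x10 : (3:ℕ) ^ 2020 % 38943534374009 = 36929456475338 := by
    rw [show (2020:ℕ) = 2 * 1010 by norm_num]; exact sq_step h2352473x9 (by norm_num) trivial
  have h2352473x11 : (3:ℕ) ^ 4041 % 38943534374009 = 17106241047244 := by
    rw [show (4041:ℕ) = 2 * 2020 + 1 by norm_num]; exact sq1_step h2352473x10 (by norm_num) trivial
  have h2352473x12 : (3:ℕ) ^ 8083 % 38943534374009 = 26224699030960 := by
    rw [show (8083:ℕ) = 2 * 4041 + 1 by norm_num]; exact sq1_step h2352473x11 (by norm_num) trivial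
  have h2352473x13 : (3:ℕ) ^ 16166 % 38943534374009 = 12488661519257 := by
    rw [show (16166:ℕ) = 2 * 8083 by norm_num]; exact sq_step h2352473x12 (by norm_num) trivial
  have h2352473x14 : (3:ℕ) ^ 32332 % 38943534374009 = 11197053289752 := by
    rw [show (32332:ℕ) = 2 * 16166 by norm_num]; exact sq_step h2352473x13 (by norm_num) trivial
  have h2352473x15 : (3:ℕ) ^ 64665 % 38943534374009 = 2771766639271 := by
    rw [show (64665:ℕ) = 2 * 32332 + 1 by norm_num]; exact sq1_step h2352473x14 (by norm_num) trivial
  have h2352473x16 : (3:ℕ) ^ 129330 % 38943534374009 = 31740603257476 := by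
    rw [show (129330:ℕ) = 2 * 64665 by norm_num]; exact sq_step h2352473x15 (by norm_num) trivial
  have h2352473x17 : (3:ℕ) ^ 258660 % 38943534374009 = 169979299024 := by
    rw [show (258660:ℕ) = 2 * 129330 by norm_num]; exact sq_step h2352473x16 (by norm_num) trivial
  have h2352473x18 : (3:ℕ) ^ 517321 % 38943534374009 = 32306482689017 := by
    rw [show (517321:ℕ) = 2 * 258660 + 1 by norm_num]; exact sq1_step h2352473x17 (by norm_num) trivial
  have h2352473x19 : (3:ℕ) ^ 1034643 % 38943534374009 = 1546338029033 := by
    rw [show (1034643:ℕ) = 2 * 517321 + 1 by norm_num]; exact sq1_step h2352473x18 (by norm_num) trivial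
  have h2352473x20 : (3:ℕ) ^ 2069287 % 38943534374009 = 10263474899855 := by
    rw [show (2069287:ℕ) = 2 * 1034643 + 1 by norm_num]; exact sq1_step h2352473x19 (by norm_num) trivial
  have h2352473x21 : (3:ℕ) ^ 4138574 % 38943534374009 = 3265075741844 := by
    rw [show (4138574:ℕ) = 2 * 2069287 by norm_num]; exact sq_step h2352473x20 (by norm_num) trivial
  have h2352473x22 : (3:ℕ) ^ 8277148 % 38943534374009 = 24213132787878 := by
    rw [show (8277148:ℕ) = 2 * 4138574 by norm_num]; exact sq_step h2352473x21 (by norm_num) trivial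
  have h2352473x23 : (3:ℕ) ^ 16554296 % 38943534374009 = 1327815719138 := by
    rw [show (16554296:ℕ) = 2 * 8277148 by norm_num]; exact sq_step h2352473x22 (by norm_num) trivial
  refine lucas_primality 38943534374009 ((3:ℕ):ZMod 38943534374009) ?_ ?_
  · have hc := natpow_cast ha45
    rw [show (38943534374009:ℕ) - 1 = 38943534374008 by norm_num, hc]
    norm_num
  · intro q hq hdvd
    have hdvd' : q ∣ (2 ^ 3 * 11 * 23 * 8179 * 2352473 : ℕ) := by
      have he : (2 ^ 3 * 11 * 23 * 8179 * 2352473 : ℕ) = 38943534374009 - 1 := by norm_num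
      rw [he]; exact hdvd
    have hp : ∀ r : ℕ, Nat.Prime r → q ∣ r → q = r := fun r hr hh => (Nat.prime_dvd_prime_iff_eq hq hr).mp hh
    have hcases : q = 2 ∨ q = 11 ∨ q = 23 ∨ q = 8179 ∨ q = 2352473 := by
      rcases hq.dvd_mul.mp hdvd' with h1 | h1
      ·
        rcases hq.dvd_mul.mp h1 with h1 | h1
        ·
          rcases hq.dvd_mul.mp h1 with h1 | h1
          ·
            rcases hq.dvd_mul.mp h1 with h1 | h1
            ·
              exact Or.inl (hp 2 (by norm_num) (hq.dvd_of_dvd_pow h1))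
            ·
              exact Or.inr (Or.inl (hp 11 (by norm_num) h1))
          ·
            exact Or.inr (Or.inr (Or.inl (hp 23 (by norm_num) h1)))
        ·
          exact Or.inr (Or.inr (Or.inr (Or.inl (hp 8179 (by norm_num) h1))))
      ·
        exact Or.inr (Or.inr (Or.inr (Or.inr (hp 2352473 (by norm_num) h1))))
    rcases hcases with rfl | rfl | rfl | rfl | rfl
    · have hc := natpow_cast h2x44
      rw [show (38943534374009:ℕ) - 1 = 2 * 19471767187004 by norm_num, Nat.mul_div_cancel_left _ (by norm_num : 0 < 2), hc]
      intro hcon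
      rw [show (1:ZMod 38943534374009) = ((1:ℕ):ZMod 38943534374009) by norm_num, ZMod.natCast_eq_natCast_iff'] at hcon
      norm_num at hcon
    · have hc := natpow_cast h11x41
      rw [show (38943534374009:ℕ) - 1 = 11 * 3540321306728 by norm_num, Nat.mul_div_cancel_left _ (by norm_num : 0 < 11), hc]
      intro hcon
      rw [show (1:ZMod 38943534374009) = ((1:ℕ):ZMod 38943534374009) by norm_num, ZMod.natCast_eq_natCast_iff'] at hcon
      norm_num at hcon
    · have hc := natpow_cast h23x40
      rw [show (38943534374009:ℕ) - 1 = 23 * 1693197146696 by norm_num, Nat.mul_div_cancel_left _ (by norm_num : 0 < 23), hc]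
      intro hcon
      rw [show (1:ZMod 38943534374009) = ((1:ℕ):ZMod 38943534374009) by norm_num, ZMod.natCast_eq_natCast_iff'] at hcon
      norm_num at hcon
    · have hc := natpow_cast h8179x32
      rw [show (38943534374009:ℕ) - 1 = 8179 * 4761405352 by norm_num, Nat.mul_div_cancel_left _ (by norm_num : 0 < 8179), hc]
      intro hcon
      rw [show (1:ZMod 38943534374009) = ((1:ℕ):ZMod 38943534374009) by norm_num, ZMod.natCast_eq_natCast_iff'] at hcon
      norm_num at hcon
    · have hc := natpow_cast h2352473x23
      rw [show (38943534374009:ℕ) - 1 = 2352473 * 16554296 by norm_num, Nat.mul_div_cancel_left _ (by norm_num : 0 < 2352473), hc]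
      intro hcon
      rw [show (1:ZMod 38943534374009) = ((1:ℕ):ZMod 38943534374009) by norm_num, ZMod.natCast_eq_natCast_iff'] at hcon
      norm_num at hcon

theorem comp_cases : ∀ k : ℕ, 1 ≤ k → k ≤ 339 → ¬ Nat.Prime (38943534114929 + 762 * k) := by
  intro k hk1 hk2
  interval_cases k
  · exact np (by norm_num : (1063:ℕ) * 36635497757 = 38943534115691) (by norm_num) (by norm_num)
  · exact np (by norm_num : (61:ℕ) * 638418592073 = 38943534116453) (by norm_num) (by norm_num)
  · exact np (by norm_num : (5:ℕ) * 7788706823443 = 38943534117215) (by norm_num) (by norm_num)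
  · exact np (by norm_num : (43:ℕ) * 905663584139 = 38943534117977) (by norm_num) (by norm_num)
  · exact np (by norm_num : (41:ℕ) * 949842295579 = 38943534118739) (by norm_num) (by norm_num)
  · exact np (by norm_num : (11:ℕ) * 3540321283591 = 38943534119501) (by norm_num) (by norm_num)
  · exact np (by norm_num : (743:ℕ) * 52413908641 = 38943534120263) (by norm_num) (by norm_num)
  · exact np (by norm_num : (5:ℕ) * 7788706824205 = 38943534121025) (by norm_num) (by norm_num)
  · exact np (by norm_num : (17:ℕ) * 2290796124811 = 38943534121787) (by norm_num) (by norm_num)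
  · exact np (by norm_num : (7:ℕ) * 5563362017507 = 38943534122549) (by norm_num) (by norm_num)
  · exact np (by norm_num : (1562719:ℕ) * 24920369 = 38943534123311) (by norm_num) (by norm_num)
  · exact np (by norm_num : (29:ℕ) * 1342880487037 = 38943534124073) (by norm_num) (by norm_num)
  · exact np (by norm_num : (5:ℕ) * 7788706824967 = 38943534124835) (by norm_num) (by norm_num)
  · exact np (by norm_num : (5813:ℕ) * 6699386569 = 38943534125597) (by norm_num) (by norm_num)
  · exact np (by norm_num : (19:ℕ) * 2049659690861 = 38943534126359) (by norm_num) (by norm_num)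
  · exact np (by norm_num : (13:ℕ) * 2995656471317 = 38943534127121) (by norm_num) (by norm_num)
  · exact np (by norm_num : (7:ℕ) * 5563362018269 = 38943534127883) (by norm_num) (by norm_num)
  · exact np (by norm_num : (5:ℕ) * 7788706825729 = 38943534128645) (by norm_num) (by norm_num)
  · exact np (by norm_num : (53:ℕ) * 734783662819 = 38943534129407) (by norm_num) (by norm_num)
  · exact np (by norm_num : (35141:ℕ) * 1108207909 = 38943534130169) (by norm_num) (by norm_num)
  · exact np (by norm_num : (47:ℕ) * 828585832573 = 38943534130931) (by norm_num) (by norm_num)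
  · exact np (by norm_num : (163:ℕ) * 238917387311 = 38943534131693) (by norm_num) (by norm_num)
  · exact np (by norm_num : (5:ℕ) * 7788706826491 = 38943534132455) (by norm_num) (by norm_num)
  · exact np (by norm_num : (7:ℕ) * 5563362019031 = 38943534133217) (by norm_num) (by norm_num)
  · exact np (by norm_num : (37:ℕ) * 1052527949567 = 38943534133979) (by norm_num) (by norm_num)
  · exact np (by norm_num : (17:ℕ) * 2290796125573 = 38943534134741) (by norm_num) (by norm_num)
  · exact np (by norm_num : (6571:ℕ) * 5926576493 = 38943534135503) (by norm_num) (by norm_num)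
  · exact np (by norm_num : (5:ℕ) * 7788706827253 = 38943534136265) (by norm_num) (by norm_num)
  · exact np (by norm_num : (13:ℕ) * 2995656472079 = 38943534137027) (by norm_num) (by norm_num)
  · exact np (by norm_num : (89:ℕ) * 437567799301 = 38943534137789) (by norm_num) (by norm_num)
  · exact np (by norm_num : (7:ℕ) * 5563362019793 = 38943534138551) (by norm_num) (by norm_num)
  · exact np (by norm_num : (619:ℕ) * 62913625427 = 38943534139313) (by norm_num) (by norm_num)
  · exact np (by norm_num : (5:ℕ) * 7788706828015 = 38943534140075) (by norm_num) (by norm_num)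
  · exact np (by norm_num : (19:ℕ) * 2049659691623 = 38943534140837) (by norm_num) (by norm_num)
  · exact np (by norm_num : (468473:ℕ) * 83128663 = 38943534141599) (by norm_num) (by norm_num)
  · exact np (by norm_num : (1051:ℕ) * 37053790811 = 38943534142361) (by norm_num) (by norm_num)
  · exact np (by norm_num : (127973:ℕ) * 304310551 = 38943534143123) (by norm_num) (by norm_num)
  · exact np (by norm_num : (5:ℕ) * 7788706828777 = 38943534143885) (by norm_num) (by norm_num)
  · exact np (by norm_num : (11:ℕ) * 3540321285877 = 38943534144647) (by norm_num) (by norm_num)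
  · exact np (by norm_num : (70663:ℕ) * 551116343 = 38943534145409) (by norm_num) (by norm_num)
  · exact np (by norm_num : (29:ℕ) * 1342880487799 = 38943534146171) (by norm_num) (by norm_num)
  · exact np (by norm_num : (13:ℕ) * 2995656472841 = 38943534146933) (by norm_num) (by norm_num)
  · exact np (by norm_num : (5:ℕ) * 7788706829539 = 38943534147695) (by norm_num) (by norm_num)
  · exact np (by norm_num : (31:ℕ) * 1256243037047 = 38943534148457) (by norm_num) (by norm_num)
  · exact np (by norm_num : (7:ℕ) * 5563362021317 = 38943534149219) (by norm_num) (by norm_num)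
  · exact np (by norm_num : (41:ℕ) * 949842296341 = 38943534149981) (by norm_num) (by norm_num)
  · exact np (by norm_num : (43:ℕ) * 905663584901 = 38943534150743) (by norm_num) (by norm_num)
  · exact np (by norm_num : (5:ℕ) * 7788706830301 = 38943534151505) (by norm_num) (by norm_num)
  · exact np (by norm_num : (73:ℕ) * 533473070579 = 38943534152267) (by norm_num) (by norm_num)
  · exact np (by norm_num : (11:ℕ) * 3540321286639 = 38943534153029) (by norm_num) (by norm_num)
  · exact np (by norm_num : (79:ℕ) * 492956128529 = 38943534153791) (by norm_num) (by norm_num)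
  · exact np (by norm_num : (7:ℕ) * 5563362022079 = 38943534154553) (by norm_num) (by norm_num)
  · exact np (by norm_num : (5:ℕ) * 7788706831063 = 38943534155315) (by norm_num) (by norm_num)
  · exact np (by norm_num : (113:ℕ) * 344633045629 = 38943534156077) (by norm_num) (by norm_num)
  · exact np (by norm_num : (13:ℕ) * 2995656473603 = 38943534156839) (by norm_num) (by norm_num)
  · exact np (by norm_num : (23:ℕ) * 1693197137287 = 38943534157601) (by norm_num) (by norm_num)
  · exact np (by norm_num : (241:ℕ) * 161591428043 = 38943534158363) (by norm_num) (by norm_num)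
  · exact np (by norm_num : (5:ℕ) * 7788706831825 = 38943534159125) (by norm_num) (by norm_num)
  · exact np (by norm_num : (7:ℕ) * 5563362022841 = 38943534159887) (by norm_num) (by norm_num)
  · exact np (by norm_num : (17:ℕ) * 2290796127097 = 38943534160649) (by norm_num) (by norm_num)
  · exact np (by norm_num : (11:ℕ) * 3540321287401 = 38943534161411) (by norm_num) (by norm_num)
  · exact np (by norm_num : (37:ℕ) * 1052527950329 = 38943534162173) (by norm_num) (by norm_num)
  · exact np (by norm_num : (5:ℕ) * 7788706832587 = 38943534162935) (by norm_num) (by norm_num)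
  · exact np (by norm_num : (1433:ℕ) * 27176227609 = 38943534163697) (by norm_num) (by norm_num)
  · exact np (by norm_num : (24923:ℕ) * 1562554033 = 38943534164459) (by norm_num) (by norm_num)
  · exact np (by norm_num : (7:ℕ) * 5563362023603 = 38943534165221) (by norm_num) (by norm_num)
  · exact np (by norm_num : (14087:ℕ) * 2764501609 = 38943534165983) (by norm_num) (by norm_num)
  · exact np (by norm_num : (5:ℕ) * 7788706833349 = 38943534166745) (by norm_num) (by norm_num)
  · exact np (by norm_num : (2237:ℕ) * 17408821711 = 38943534167507) (by norm_num) (by norm_num)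
  · exact np (by norm_num : (29:ℕ) * 1342880488561 = 38943534168269) (by norm_num) (by norm_num)
  · exact np (by norm_num : (442991:ℕ) * 87910441 = 38943534169031) (by norm_num) (by norm_num)
  · exact np (by norm_num : (11:ℕ) * 3540321288163 = 38943534169793) (by norm_num) (by norm_num)
  · exact np (by norm_num : (5:ℕ) * 7788706834111 = 38943534170555) (by norm_num) (by norm_num)
  · exact np (by norm_num : (16421:ℕ) * 2371568977 = 38943534171317) (by norm_num) (by norm_num)
  · exact np (by norm_num : (31:ℕ) * 1256243037809 = 38943534172079) (by norm_num) (by norm_num)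
  · exact np (by norm_num : (497153:ℕ) * 78333097 = 38943534172841) (by norm_num) (by norm_num)
  · exact np (by norm_num : (17:ℕ) * 2290796127859 = 38943534173603) (by norm_num) (by norm_num)
  · exact np (by norm_num : (5:ℕ) * 7788706834873 = 38943534174365) (by norm_num) (by norm_num)
  · exact np (by norm_num : (23:ℕ) * 1693197138049 = 38943534175127) (by norm_num) (by norm_num)
  · exact np (by norm_num : (7:ℕ) * 5563362025127 = 38943534175889) (by norm_num) (by norm_num)
  · exact np (by norm_num : (13:ℕ) * 2995656475127 = 38943534176651) (by norm_num) (by norm_num)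
  · exact np (by norm_num : (523:ℕ) * 74461824431 = 38943534177413) (by norm_num) (by norm_num)
  · exact np (by norm_num : (5:ℕ) * 7788706835635 = 38943534178175) (by norm_num) (by norm_num)
  · exact np (by norm_num : (4721:ℕ) * 8249001097 = 38943534178937) (by norm_num) (by norm_num)
  · exact np (by norm_num : (193:ℕ) * 201779969843 = 38943534179699) (by norm_num) (by norm_num)
  · exact np (by norm_num : (29629:ℕ) * 1314372209 = 38943534180461) (by norm_num) (by norm_num)
  · exact np (by norm_num : (7:ℕ) * 5563362025889 = 38943534181223) (by norm_num) (by norm_num)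
  · exact np (by norm_num : (5:ℕ) * 7788706836397 = 38943534181985) (by norm_num) (by norm_num)
  · exact np (by norm_num : (277:ℕ) * 140590376111 = 38943534182747) (by norm_num) (by norm_num)
  · exact np (by norm_num : (43:ℕ) * 905663585663 = 38943534183509) (by norm_num) (by norm_num)
  · exact np (by norm_num : (19:ℕ) * 2049659693909 = 38943534184271) (by norm_num) (by norm_num)
  · exact np (by norm_num : (2251:ℕ) * 17300548283 = 38943534185033) (by norm_num) (by norm_num)
  · exact np (by norm_num : (5:ℕ) * 7788706837159 = 38943534185795) (by norm_num) (by norm_num)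
  · exact np (by norm_num : (7:ℕ) * 5563362026651 = 38943534186557) (by norm_num) (by norm_num)
  · exact np (by norm_num : (20431:ℕ) * 1906100249 = 38943534187319) (by norm_num) (by norm_num)
  · exact np (by norm_num : (1222411:ℕ) * 31857971 = 38943534188081) (by norm_num) (by norm_num)
  · exact np (by norm_num : (71:ℕ) * 548500481533 = 38943534188843) (by norm_num) (by norm_num)
  · exact np (by norm_num : (5:ℕ) * 7788706837921 = 38943534189605) (by norm_num) (by norm_num)
  · exact np (by norm_num : (29:ℕ) * 1342880489323 = 38943534190367) (by norm_num) (by norm_num)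
  · exact np (by norm_num : (2161:ℕ) * 18021070889 = 38943534191129) (by norm_num) (by norm_num)
  · exact np (by norm_num : (7:ℕ) * 5563362027413 = 38943534191891) (by norm_num) (by norm_num)
  · exact np (by norm_num : (23:ℕ) * 1693197138811 = 38943534192653) (by norm_num) (by norm_num)
  · exact np (by norm_num : (5:ℕ) * 7788706838683 = 38943534193415) (by norm_num) (by norm_num)
  · exact np (by norm_num : (101:ℕ) * 385579546477 = 38943534194177) (by norm_num) (by norm_num)
  · exact np (by norm_num : (11:ℕ) * 3540321290449 = 38943534194939) (by norm_num) (by norm_num)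
  · exact np (by norm_num : (31:ℕ) * 1256243038571 = 38943534195701) (by norm_num) (by norm_num)
  · exact np (by norm_num : (13:ℕ) * 2995656476651 = 38943534196463) (by norm_num) (by norm_num)
  · exact np (by norm_num : (5:ℕ) * 7788706839445 = 38943534197225) (by norm_num) (by norm_num)
  · exact np (by norm_num : (103:ℕ) * 378092565029 = 38943534197987) (by norm_num) (by norm_num)
  · exact np (by norm_num : (19:ℕ) * 2049659694671 = 38943534198749) (by norm_num) (by norm_num)
  · exact np (by norm_num : (17:ℕ) * 2290796129383 = 38943534199511) (by norm_num) (by norm_num)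
  · exact np (by norm_num : (16229:ℕ) * 2399626237 = 38943534200273) (by norm_num) (by norm_num)
  · exact np (by norm_num : (5:ℕ) * 7788706840207 = 38943534201035) (by norm_num) (by norm_num)
  · exact np (by norm_num : (131501:ℕ) * 296146297 = 38943534201797) (by norm_num) (by norm_num)
  · exact np (by norm_num : (7:ℕ) * 5563362028937 = 38943534202559) (by norm_num) (by norm_num)
  · exact np (by norm_num : (11:ℕ) * 3540321291211 = 38943534203321) (by norm_num) (by norm_num)
  · exact np (by norm_num : (1913:ℕ) * 20357310091 = 38943534204083) (by norm_num) (by norm_num)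
  · exact np (by norm_num : (5:ℕ) * 7788706840969 = 38943534204845) (by norm_num) (by norm_num)
  · exact np (by norm_num : (89:ℕ) * 437567800063 = 38943534205607) (by norm_num) (by norm_num)
  · exact np (by norm_num : (13:ℕ) * 2995656477413 = 38943534206369) (by norm_num) (by norm_num)
  · exact np (by norm_num : (28867:ℕ) * 1349067593 = 38943534207131) (by norm_num) (by norm_num)
  · exact np (by norm_num : (7:ℕ) * 5563362029699 = 38943534207893) (by norm_num) (by norm_num)
  · exact np (by norm_num : (5:ℕ) * 7788706841731 = 38943534208655) (by norm_num) (by norm_num)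
  · exact np (by norm_num : (61:ℕ) * 638418593597 = 38943534209417) (by norm_num) (by norm_num)
  · exact np (by norm_num : (23:ℕ) * 1693197139573 = 38943534210179) (by norm_num) (by norm_num)
  · exact np (by norm_num : (21467:ℕ) * 1814111623 = 38943534210941) (by norm_num) (by norm_num)
  · exact np (by norm_num : (11:ℕ) * 3540321291973 = 38943534211703) (by norm_num) (by norm_num)
  · exact np (by norm_num : (5:ℕ) * 7788706842493 = 38943534212465) (by norm_num) (by norm_num)
  · exact np (by norm_num : (7:ℕ) * 5563362030461 = 38943534213227) (by norm_num) (by norm_num)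
  · exact np (by norm_num : (79:ℕ) * 492956129291 = 38943534213989) (by norm_num) (by norm_num)
  · exact np (by norm_num : (1193:ℕ) * 32643364807 = 38943534214751) (by norm_num) (by norm_num)
  · exact np (by norm_num : (4822199:ℕ) * 8075887 = 38943534215513) (by norm_num) (by norm_num)
  · exact np (by norm_num : (5:ℕ) * 7788706843255 = 38943534216275) (by norm_num) (by norm_num)
  · exact np (by norm_num : (25469:ℕ) * 1529056273 = 38943534217037) (by norm_num) (by norm_num)
  · exact np (by norm_num : (2179:ℕ) * 17872204781 = 38943534217799) (by norm_num) (by norm_num)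
  · exact np (by norm_num : (7:ℕ) * 5563362031223 = 38943534218561) (by norm_num) (by norm_num)
  · exact np (by norm_num : (31:ℕ) * 1256243039333 = 38943534219323) (by norm_num) (by norm_num)
  · exact np (by norm_num : (5:ℕ) * 7788706844017 = 38943534220085) (by norm_num) (by norm_num)
  · exact np (by norm_num : (74779:ℕ) * 520781693 = 38943534220847) (by norm_num) (by norm_num)
  · exact np (by norm_num : (67:ℕ) * 581246779427 = 38943534221609) (by norm_num) (by norm_num)
  · exact np (by norm_num : (44773:ℕ) * 869799527 = 38943534222371) (by norm_num) (by norm_num)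
  · exact np (by norm_num : (59:ℕ) * 660059902087 = 38943534223133) (by norm_num) (by norm_num)
  · exact np (by norm_num : (5:ℕ) * 7788706844779 = 38943534223895) (by norm_num) (by norm_num)
  · exact np (by norm_num : (4970519:ℕ) * 7834903 = 38943534224657) (by norm_num) (by norm_num)
  · exact np (by norm_num : (17:ℕ) * 2290796130907 = 38943534225419) (by norm_num) (by norm_num)
  · exact np (by norm_num : (13:ℕ) * 2995656478937 = 38943534226181) (by norm_num) (by norm_num)
  · exact np (by norm_num : (839:ℕ) * 46416608137 = 38943534226943) (by norm_num) (by norm_num)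
  · exact np (by norm_num : (5:ℕ) * 7788706845541 = 38943534227705) (by norm_num) (by norm_num)
  · exact np (by norm_num : (11:ℕ) * 3540321293497 = 38943534228467) (by norm_num) (by norm_num)
  · exact np (by norm_num : (7:ℕ) * 5563362032747 = 38943534229229) (by norm_num) (by norm_num)
  · exact np (by norm_num : (30977:ℕ) * 1257175783 = 38943534229991) (by norm_num) (by norm_num)
  · exact np (by norm_num : (278269:ℕ) * 139949237 = 38943534230753) (by norm_num) (by norm_num)
  · exact np (by norm_num : (5:ℕ) * 7788706846303 = 38943534231515) (by norm_num) (by norm_num)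
  · exact np (by norm_num : (2190157:ℕ) * 17781161 = 38943534232277) (by norm_num) (by norm_num)
  · exact np (by norm_num : (1171:ℕ) * 33256647509 = 38943534233039) (by norm_num) (by norm_num)
  · exact np (by norm_num : (2598613:ℕ) * 14986277 = 38943534233801) (by norm_num) (by norm_num)
  · exact np (by norm_num : (7:ℕ) * 5563362033509 = 38943534234563) (by norm_num) (by norm_num)
  · exact np (by norm_num : (5:ℕ) * 7788706847065 = 38943534235325) (by norm_num) (by norm_num)
  · exact np (by norm_num : (13:ℕ) * 2995656479699 = 38943534236087) (by norm_num) (by norm_num)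
  · exact np (by norm_num : (11:ℕ) * 3540321294259 = 38943534236849) (by norm_num) (by norm_num)
  · exact np (by norm_num : (283:ℕ) * 137609661617 = 38943534237611) (by norm_num) (by norm_num)
  · exact np (by norm_num : (17:ℕ) * 2290796131669 = 38943534238373) (by norm_num) (by norm_num)
  · exact np (by norm_num : (5:ℕ) * 7788706847827 = 38943534239135) (by norm_num) (by norm_num)
  · exact np (by norm_num : (7:ℕ) * 5563362034271 = 38943534239897) (by norm_num) (by norm_num)
  · exact np (by norm_num : (269987:ℕ) * 144242257 = 38943534240659) (by norm_num) (by norm_num)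
  · exact np (by norm_num : (11399:ℕ) * 3416399179 = 38943534241421) (by norm_num) (by norm_num)
  · exact np (by norm_num : (19:ℕ) * 2049659696957 = 38943534242183) (by norm_num) (by norm_num)
  · exact np (by norm_num : (5:ℕ) * 7788706848589 = 38943534242945) (by norm_num) (by norm_num)
  · exact np (by norm_num : (41:ℕ) * 949842298627 = 38943534243707) (by norm_num) (by norm_num)
  · exact np (by norm_num : (107:ℕ) * 363958263967 = 38943534244469) (by norm_num) (by norm_num)
  · exact np (by norm_num : (7:ℕ) * 5563362035033 = 38943534245231) (by norm_num) (by norm_num)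
  · exact np (by norm_num : (13:ℕ) * 2995656480461 = 38943534245993) (by norm_num) (by norm_num)
  · exact np (by norm_num : (5:ℕ) * 7788706849351 = 38943534246755) (by norm_num) (by norm_num)
  · exact np (by norm_num : (293:ℕ) * 132913086169 = 38943534247517) (by norm_num) (by norm_num)
  · exact np (by norm_num : (24359:ℕ) * 1598732881 = 38943534248279) (by norm_num) (by norm_num)
  · exact np (by norm_num : (43:ℕ) * 905663587187 = 38943534249041) (by norm_num) (by norm_num)
  · exact np (by norm_num : (997:ℕ) * 39060716399 = 38943534249803) (by norm_num) (by norm_num)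
  · exact np (by norm_num : (5:ℕ) * 7788706850113 = 38943534250565) (by norm_num) (by norm_num)
  · exact np (by norm_num : (17:ℕ) * 2290796132431 = 38943534251327) (by norm_num) (by norm_num)
  · exact np (by norm_num : (35099:ℕ) * 1109534011 = 38943534252089) (by norm_num) (by norm_num)
  · exact np (by norm_num : (7643:ℕ) * 5095320457 = 38943534252851) (by norm_num) (by norm_num)
  · exact np (by norm_num : (11:ℕ) * 3540321295783 = 38943534253613) (by norm_num) (by norm_num)
  · exact np (by norm_num : (5:ℕ) * 7788706850875 = 38943534254375) (by norm_num) (by norm_num)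
  · exact np (by norm_num : (1361:ℕ) * 28613912017 = 38943534255137) (by norm_num) (by norm_num)
  · exact np (by norm_num : (7:ℕ) * 5563362036557 = 38943534255899) (by norm_num) (by norm_num)
  · exact np (by norm_num : (19:ℕ) * 2049659697719 = 38943534256661) (by norm_num) (by norm_num)
  · exact np (by norm_num : (587:ℕ) * 66343329229 = 38943534257423) (by norm_num) (by norm_num)
  · exact np (by norm_num : (5:ℕ) * 7788706851637 = 38943534258185) (by norm_num) (by norm_num)
  · exact np (by norm_num : (295871:ℕ) * 131623357 = 38943534258947) (by norm_num) (by norm_num)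
  · exact np (by norm_num : (697523:ℕ) * 55831183 = 38943534259709) (by norm_num) (by norm_num)
  · exact np (by norm_num : (1223:ℕ) * 31842628177 = 38943534260471) (by norm_num) (by norm_num)
  · exact np (by norm_num : (7:ℕ) * 5563362037319 = 38943534261233) (by norm_num) (by norm_num)
  · exact np (by norm_num : (5:ℕ) * 7788706852399 = 38943534261995) (by norm_num) (by norm_num)
  · exact np (by norm_num : (23:ℕ) * 1693197141859 = 38943534262757) (by norm_num) (by norm_num)
  · exact np (by norm_num : (73:ℕ) * 533473072103 = 38943534263519) (by norm_num) (by norm_num)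
  · exact np (by norm_num : (17:ℕ) * 2290796133193 = 38943534264281) (by norm_num) (by norm_num)
  · exact np (by norm_num : (3550711:ℕ) * 10967813 = 38943534265043) (by norm_num) (by norm_num)
  · exact np (by norm_num : (5:ℕ) * 7788706853161 = 38943534265805) (by norm_num) (by norm_num)
  · exact np (by norm_num : (7:ℕ) * 5563362038081 = 38943534266567) (by norm_num) (by norm_num)
  · exact np (by norm_num : (196643:ℕ) * 198041803 = 38943534267329) (by norm_num) (by norm_num)
  · exact np (by norm_num : (59:ℕ) * 660059902849 = 38943534268091) (by norm_num) (by norm_num)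
  · exact np (by norm_num : (337:ℕ) * 115559448869 = 38943534268853) (by norm_num) (by norm_num)
  · exact np (by norm_num : (5:ℕ) * 7788706853923 = 38943534269615) (by norm_num) (by norm_num)
  · exact np (by norm_num : (11:ℕ) * 3540321297307 = 38943534270377) (by norm_num) (by norm_num)
  · exact np (by norm_num : (19:ℕ) * 2049659698481 = 38943534271139) (by norm_num) (by norm_num)
  · exact np (by norm_num : (7:ℕ) * 5563362038843 = 38943534271901) (by norm_num) (by norm_num)
  · exact np (by norm_num : (67:ℕ) * 581246780189 = 38943534272663) (by norm_num) (by norm_num)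
  · exact np (by norm_num : (5:ℕ) * 7788706854685 = 38943534273425) (by norm_num) (by norm_num)
  · exact np (by norm_num : (47:ℕ) * 828585835621 = 38943534274187) (by norm_num) (by norm_num)
  · exact np (by norm_num : (37:ℕ) * 1052527953377 = 38943534274949) (by norm_num) (by norm_num)
  · exact np (by norm_num : (13:ℕ) * 2995656482747 = 38943534275711) (by norm_num) (by norm_num)
  · exact np (by norm_num : (97:ℕ) * 401479734809 = 38943534276473) (by norm_num) (by norm_num)
  · exact np (by norm_num : (5:ℕ) * 7788706855447 = 38943534277235) (by norm_num) (by norm_num)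
  · exact np (by norm_num : (3343:ℕ) * 11649277379 = 38943534277997) (by norm_num) (by norm_num)
  · exact np (by norm_num : (11:ℕ) * 3540321298069 = 38943534278759) (by norm_num) (by norm_num)
  · exact np (by norm_num : (83:ℕ) * 469199208187 = 38943534279521) (by norm_num) (by norm_num)
  · exact np (by norm_num : (23:ℕ) * 1693197142621 = 38943534280283) (by norm_num) (by norm_num)
  · exact np (by norm_num : (5:ℕ) * 7788706856209 = 38943534281045) (by norm_num) (by norm_num)
  · exact np (by norm_num : (43:ℕ) * 905663587949 = 38943534281807) (by norm_num) (by norm_num)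
  · exact np (by norm_num : (7:ℕ) * 5563362040367 = 38943534282569) (by norm_num) (by norm_num)
  · exact np (by norm_num : (821:ℕ) * 47434268311 = 38943534283331) (by norm_num) (by norm_num)
  · exact np (by norm_num : (1709:ℕ) * 22787322577 = 38943534284093) (by norm_num) (by norm_num)
  · exact np (by norm_num : (5:ℕ) * 7788706856971 = 38943534284855) (by norm_num) (by norm_num)
  · exact np (by norm_num : (13:ℕ) * 2995656483509 = 38943534285617) (by norm_num) (by norm_num)
  · exact np (by norm_num : (267049:ℕ) * 145829171 = 38943534286379) (by norm_num) (by norm_num)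
  · exact np (by norm_num : (11:ℕ) * 3540321298831 = 38943534287141) (by norm_num) (by norm_num)
  · exact np (by norm_num : (7:ℕ) * 5563362041129 = 38943534287903) (by norm_num) (by norm_num)
  · exact np (by norm_num : (5:ℕ) * 7788706857733 = 38943534288665) (by norm_num) (by norm_num)
  · exact np (by norm_num : (547:ℕ) * 71194761041 = 38943534289427) (by norm_num) (by norm_num)
  · exact np (by norm_num : (17:ℕ) * 2290796134717 = 38943534290189) (by norm_num) (by norm_num)
  · exact np (by norm_num : (53:ℕ) * 734783665867 = 38943534290951) (by norm_num) (by norm_num)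
  · exact np (by norm_num : (131:ℕ) * 297278887723 = 38943534291713) (by norm_num) (by norm_num)
  · exact np (by norm_num : (5:ℕ) * 7788706858495 = 38943534292475) (by norm_num) (by norm_num)
  · exact np (by norm_num : (7:ℕ) * 5563362041891 = 38943534293237) (by norm_num) (by norm_num)
  · exact np (by norm_num : (1117:ℕ) * 34864399547 = 38943534293999) (by norm_num) (by norm_num)
  · exact np (by norm_num : (1982521:ℕ) * 19643441 = 38943534294761) (by norm_num) (by norm_num)
  · exact np (by norm_num : (11:ℕ) * 3540321299593 = 38943534295523) (by norm_num) (by norm_num)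
  · exact np (by norm_num : (5:ℕ) * 7788706859257 = 38943534296285) (by norm_num) (by norm_num)
  · exact np (by norm_num : (71:ℕ) * 548500483057 = 38943534297047) (by norm_num) (by norm_num)
  · exact np (by norm_num : (23:ℕ) * 1693197143383 = 38943534297809) (by norm_num) (by norm_num)
  · exact np (by norm_num : (7:ℕ) * 5563362042653 = 38943534298571) (by norm_num) (by norm_num)
  · exact np (by norm_num : (398467:ℕ) * 97733399 = 38943534299333) (by norm_num) (by norm_num)
  · exact np (by norm_num : (5:ℕ) * 7788706860019 = 38943534300095) (by norm_num) (by norm_num)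
  · exact np (by norm_num : (29:ℕ) * 1342880493133 = 38943534300857) (by norm_num) (by norm_num)
  · exact np (by norm_num : (541:ℕ) * 71984351759 = 38943534301619) (by norm_num) (by norm_num)
  · exact np (by norm_num : (61:ℕ) * 638418595121 = 38943534302381) (by norm_num) (by norm_num)
  · exact np (by norm_num : (17:ℕ) * 2290796135479 = 38943534303143) (by norm_num) (by norm_num)
  · exact np (by norm_num : (5:ℕ) * 7788706860781 = 38943534303905) (by norm_num) (by norm_num)
  · exact np (by norm_num : (617:ℕ) * 63117559651 = 38943534304667) (by norm_num) (by norm_num)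
  · exact np (by norm_num : (13:ℕ) * 2995656485033 = 38943534305429) (by norm_num) (by norm_num)
  · exact np (by norm_num : (41:ℕ) * 949842300151 = 38943534306191) (by norm_num) (by norm_num)
  · exact np (by norm_num : (3331:ℕ) * 11691244163 = 38943534306953) (by norm_num) (by norm_num)
  · exact np (by norm_num : (5:ℕ) * 7788706861543 = 38943534307715) (by norm_num) (by norm_num)
  · exact np (by norm_num : (135449:ℕ) * 287514373 = 38943534308477) (by norm_num) (by norm_num)
  · exact np (by norm_num : (7:ℕ) * 5563362044177 = 38943534309239) (by norm_num) (by norm_num)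
  · exact np (by norm_num : (47:ℕ) * 828585836383 = 38943534310001) (by norm_num) (by norm_num)
  · exact np (by norm_num : (503:ℕ) * 77422533421 = 38943534310763) (by norm_num) (by norm_num)
  · exact np (by norm_num : (5:ℕ) * 7788706862305 = 38943534311525) (by norm_num) (by norm_num)
  · exact np (by norm_num : (11:ℕ) * 3540321301117 = 38943534312287) (by norm_num) (by norm_num)
  · exact np (by norm_num : (59:ℕ) * 660059903611 = 38943534313049) (by norm_num) (by norm_num)
  · exact np (by norm_num : (31:ℕ) * 1256243042381 = 38943534313811) (by norm_num) (by norm_num)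
  · exact np (by norm_num : (7:ℕ) * 5563362044939 = 38943534314573) (by norm_num) (by norm_num)
  · exact np (by norm_num : (5:ℕ) * 7788706863067 = 38943534315335) (by norm_num) (by norm_num)
  · exact np (by norm_num : (17:ℕ) * 2290796136241 = 38943534316097) (by norm_num) (by norm_num)
  · exact np (by norm_num : (883:ℕ) * 44103662873 = 38943534316859) (by norm_num) (by norm_num)
  · exact np (by norm_num : (2819:ℕ) * 13814662759 = 38943534317621) (by norm_num) (by norm_num)
  · exact np (by norm_num : (229:ℕ) * 170059101827 = 38943534318383) (by norm_num) (by norm_num)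
  · exact np (by norm_num : (5:ℕ) * 7788706863829 = 38943534319145) (by norm_num) (by norm_num)
  · exact np (by norm_num : (7:ℕ) * 5563362045701 = 38943534319907) (by norm_num) (by norm_num)
  · exact np (by norm_num : (11:ℕ) * 3540321301879 = 38943534320669) (by norm_num) (by norm_num)
  · exact np (by norm_num : (199:ℕ) * 195696152369 = 38943534321431) (by norm_num) (by norm_num)
  · exact np (by norm_num : (25301:ℕ) * 1539209293 = 38943534322193) (by norm_num) (by norm_num)
  · exact np (by norm_num : (5:ℕ) * 7788706864591 = 38943534322955) (by norm_num) (by norm_num)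
  · exact np (by norm_num : (67:ℕ) * 581246780951 = 38943534323717) (by norm_num) (by norm_num)
  · exact np (by norm_num : (95393:ℕ) * 408243103 = 38943534324479) (by norm_num) (by norm_num)
  · exact np (by norm_num : (7:ℕ) * 5563362046463 = 38943534325241) (by norm_num) (by norm_num)
  · exact np (by norm_num : (107:ℕ) * 363958264729 = 38943534326003) (by norm_num) (by norm_num)
  · exact np (by norm_num : (5:ℕ) * 7788706865353 = 38943534326765) (by norm_num) (by norm_num)
  · exact np (by norm_num : (439:ℕ) * 88709645393 = 38943534327527) (by norm_num) (by norm_num)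
  · exact np (by norm_num : (113:ℕ) * 344633047153 = 38943534328289) (by norm_num) (by norm_num)
  · exact np (by norm_num : (11:ℕ) * 3540321302641 = 38943534329051) (by norm_num) (by norm_num)
  · exact np (by norm_num : (29837:ℕ) * 1305209449 = 38943534329813) (by norm_num) (by norm_num)
  · exact np (by norm_num : (5:ℕ) * 7788706866115 = 38943534330575) (by norm_num) (by norm_num)
  · exact np (by norm_num : (37:ℕ) * 1052527954901 = 38943534331337) (by norm_num) (by norm_num)
  · exact np (by norm_num : (373:ℕ) * 104406258263 = 38943534332099) (by norm_num) (by norm_num)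
  · exact np (by norm_num : (23:ℕ) * 1693197144907 = 38943534332861) (by norm_num) (by norm_num)
  · exact np (by norm_num : (167:ℕ) * 233194816369 = 38943534333623) (by norm_num) (by norm_num)
  · exact np (by norm_num : (5:ℕ) * 7788706866877 = 38943534334385) (by norm_num) (by norm_num)
  · exact np (by norm_num : (13:ℕ) * 2995656487319 = 38943534335147) (by norm_num) (by norm_num)
  · exact np (by norm_num : (7:ℕ) * 5563362047987 = 38943534335909) (by norm_num) (by norm_num)
  · exact np (by norm_num : (601:ℕ) * 64797894071 = 38943534336671) (by norm_num) (by norm_num)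
  · exact np (by norm_num : (11:ℕ) * 3540321303403 = 38943534337433) (by norm_num) (by norm_num)
  · exact np (by norm_num : (5:ℕ) * 7788706867639 = 38943534338195) (by norm_num) (by norm_num)
  · exact np (by norm_num : (89213:ℕ) * 436523089 = 38943534338957) (by norm_num) (by norm_num)
  · exact np (by norm_num : (61961:ℕ) * 628516879 = 38943534339719) (by norm_num) (by norm_num)
  · exact np (by norm_num : (491:ℕ) * 79314733891 = 38943534340481) (by norm_num) (by norm_num)
  · exact np (by norm_num : (7:ℕ) * 5563362048749 = 38943534341243) (by norm_num) (by norm_num)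
  · exact np (by norm_num : (5:ℕ) * 7788706868401 = 38943534342005) (by norm_num) (by norm_num)
  · exact np (by norm_num : (83:ℕ) * 469199208949 = 38943534342767) (by norm_num) (by norm_num)
  · exact np (by norm_num : (19:ℕ) * 2049659702291 = 38943534343529) (by norm_num) (by norm_num)
  · exact np (by norm_num : (109:ℕ) * 357280131599 = 38943534344291) (by norm_num) (by norm_num)
  · exact np (by norm_num : (13:ℕ) * 2995656488081 = 38943534345053) (by norm_num) (by norm_num)
  · exact np (by norm_num : (5:ℕ) * 7788706869163 = 38943534345815) (by norm_num) (by norm_num)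
  · exact np (by norm_num : (7:ℕ) * 5563362049511 = 38943534346577) (by norm_num) (by norm_num)
  · exact np (by norm_num : (43:ℕ) * 905663589473 = 38943534347339) (by norm_num) (by norm_num)
  · exact np (by norm_num : (101:ℕ) * 385579548001 = 38943534348101) (by norm_num) (by norm_num)
  · exact np (by norm_num : (61:ℕ) * 638418595883 = 38943534348863) (by norm_num) (by norm_num)
  · exact np (by norm_num : (5:ℕ) * 7788706869925 = 38943534349625) (by norm_num) (by norm_num)
  · exact np (by norm_num : (23:ℕ) * 1693197145669 = 38943534350387) (by norm_num) (by norm_num)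
  · exact np (by norm_num : (71:ℕ) * 548500483819 = 38943534351149) (by norm_num) (by norm_num)
  · exact np (by norm_num : (7:ℕ) * 5563362050273 = 38943534351911) (by norm_num) (by norm_num)
  · exact np (by norm_num : (35677:ℕ) * 1091558549 = 38943534352673) (by norm_num) (by norm_num)
  · exact np (by norm_num : (5:ℕ) * 7788706870687 = 38943534353435) (by norm_num) (by norm_num)
  · exact np (by norm_num : (11:ℕ) * 3540321304927 = 38943534354197) (by norm_num) (by norm_num)
  · exact np (by norm_num : (13:ℕ) * 2995656488843 = 38943534354959) (by norm_num) (by norm_num)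
  · exact np (by norm_num : (797:ℕ) * 48862652893 = 38943534355721) (by norm_num) (by norm_num)
  · exact np (by norm_num : (26107:ℕ) * 1491689369 = 38943534356483) (by norm_num) (by norm_num)
  · exact np (by norm_num : (5:ℕ) * 7788706871449 = 38943534357245) (by norm_num) (by norm_num)
  · exact np (by norm_num : (19:ℕ) * 2049659703053 = 38943534358007) (by norm_num) (by norm_num)
  · exact np (by norm_num : (344857:ℕ) * 112926617 = 38943534358769) (by norm_num) (by norm_num)
  · exact np (by norm_num : (37:ℕ) * 1052527955663 = 38943534359531) (by norm_num) (by norm_num)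
  · exact np (by norm_num : (2339:ℕ) * 16649651287 = 38943534360293) (by norm_num) (by norm_num)
  · exact np (by norm_num : (5:ℕ) * 7788706872211 = 38943534361055) (by norm_num) (by norm_num)
  · exact np (by norm_num : (7411:ℕ) * 5254828547 = 38943534361817) (by norm_num) (by norm_num)
  · exact np (by norm_num : (7:ℕ) * 5563362051797 = 38943534362579) (by norm_num) (by norm_num)
  · exact np (by norm_num : (281:ℕ) * 138589090261 = 38943534363341) (by norm_num) (by norm_num)
  · exact np (by norm_num : (1439:ℕ) * 27062914777 = 38943534364103) (by norm_num) (by norm_num)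
  · exact np (by norm_num : (5:ℕ) * 7788706872973 = 38943534364865) (by norm_num) (by norm_num)
  · exact np (by norm_num : (911:ℕ) * 42748116757 = 38943534365627) (by norm_num) (by norm_num)
  · exact np (by norm_num : (1163783:ℕ) * 33462883 = 38943534366389) (by norm_num) (by norm_num)
  · exact np (by norm_num : (29:ℕ) * 1342880495419 = 38943534367151) (by norm_num) (by norm_num)
  · exact np (by norm_num : (7:ℕ) * 5563362052559 = 38943534367913) (by norm_num) (by norm_num)
  · exact np (by norm_num : (5:ℕ) * 7788706873735 = 38943534368675) (by norm_num) (by norm_num)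
  · exact np (by norm_num : (137873:ℕ) * 282459469 = 38943534369437) (by norm_num) (by norm_num)
  · exact np (by norm_num : (2953:ℕ) * 13187786783 = 38943534370199) (by norm_num) (by norm_num)
  · exact np (by norm_num : (11:ℕ) * 3540321306451 = 38943534370961) (by norm_num) (by norm_num)
  · exact np (by norm_num : (53:ℕ) * 734783667391 = 38943534371723) (by norm_num) (by norm_num)
  · exact np (by norm_num : (5:ℕ) * 7788706874497 = 38943534372485) (by norm_num) (by norm_num)
  · exact np (by norm_num : (7:ℕ) * 5563362053321 = 38943534373247) (by norm_num) (by norm_num)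

/-- A gap of length 340·762 in the AP with common difference 762 starting at 38943534114929,
with 38943534114929 exceeding the square of the gap, and the stated relation between the
floors of the square roots of the bounding primes. -/
theorem exceptional_gap_q762 :
    Nat.Prime 38943534114929 ∧
    Nat.Prime (38943534114929 + 340 * 762) ∧
    (∀ m : ℕ, 38943534114929 < m → m < 38943534114929 + 340 * 762 → m % 762 = 38943534114929 % 762 → ¬ Nat.Prime m) ∧
    (340 * 762) * (340 * 762) < 38943534114929 ∧
    Nat.sqrt 38943534114929 = Nat.sqrt (38943534114929 + 340 * 762) := by
  have hq' : Nat.Prime (38943534114929 + 340 * 762) := by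
    rw [show (38943534114929 + 340 * 762 : ℕ) = 38943534374009 by norm_num]
    exact prime_q
  refine ⟨prime_p, hq', ?_, by norm_num, ?_⟩
  · intro m h1 h2 h3
    have hmod : (38943534114929:ℕ) ≡ m [MOD 762] := h3.symm
    have hdvd : 762 ∣ m - 38943534114929 := (Nat.modEq_iff_dvd' h1.le).mp hmod
    obtain ⟨k, hk⟩ := hdvd
    have hm : m = 38943534114929 + 762 * k := by omega
    rw [hm]
    exact comp_cases k (by omega) (by omega)
  · have h1 : Nat.sqrt 38943534114929 = 6240475 := by
      have ha : (6240475:ℕ) ≤ Nat.sqrt 38943534114929 := Nat.le_sqrt'.mpr (by norm_num)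
      have hb : Nat.sqrt 38943534114929 < 6240476 := Nat.sqrt_lt'.mpr (by norm_num)
      omega
    have h2 : Nat.sqrt (38943534114929 + 340 * 762) = 6240475 := by
      have ha : (6240475:ℕ) ≤ Nat.sqrt (38943534114929 + 340 * 762) := Nat.le_sqrt'.mpr (by norm_num)
      have hb : Nat.sqrt (38943534114929 + 340 * 762) < 6240476 := Nat.sqrt_lt'.mpr (by norm_num)
      omega
    rw [h1, h2]
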